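/- arXiv:2303.13990 — 5 statements merged into one kernel-verified Lean document; each statement's English description precedes it below -/
import Mathlib

section
/- Let (R, μ) be a σ-finite nonatomic measure space, let f ≥ 0 and f_n (n ∈ ℕ) be μ-measurable functions on R such that f_n ↓ f μ-almost everywhere. Then the sequence ((f_n)_*) of nondecreasing rearrangements is nonincreasing and (f_n)_*(t) ↓ f_*(t) for Lebesgue-almost every t ∈ (0, ∞); more precisely, (f_n)_*(t) → f_*(t) at every point t of continuity of f_*. -/
open MeasureTheory Set Filter Topology ENNReal

variable {α : Type*} [MeasurableSpace α]

/-- A measure is *nonatomic* if every set of positive measure contains a measurable subset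
of strictly smaller, positive measure. -/
def Nonatomic (μ : Measure α) : Prop :=
  ∀ E : Set α, MeasurableSet E → 0 < μ E → ∃ F, F ⊆ E ∧ MeasurableSet F ∧ 0 < μ F ∧ μ F < μ E

/-- The lower distribution function `κ_f(s) = μ {x : |f x| < s}`. -/
noncomputable def lowerDistrib (μ : Measure α) (f : α → ℝ) (s : ℝ) : ℝ≥0∞ :=
  μ {x | |f x| < s}

/-- The nondecreasing rearrangement `f_*(t) = sup {s > 0 : κ_f(s) < t}` (with `sup ∅ = 0`). -/
noncomputable def ndRearr (μ : Measure α) (f : α → ℝ) (t : ℝ) : ℝ≥0∞ :=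
  sSup {y : ℝ≥0∞ | ∃ s : ℝ, 0 < s ∧ lowerDistrib μ f s < ENNReal.ofReal t ∧ y = ENNReal.ofReal s}

/-- The distribution function `μ_f(s) = μ {x : |f x| > s}`. -/
noncomputable def distrib (μ : Measure α) (f : α → ℝ) (s : ℝ) : ℝ≥0∞ :=
  μ {x | s < |f x|}

/-- The nonincreasing rearrangement `f^*(t) = inf {s > 0 : μ_f(s) ≤ t}` (with `inf ∅ = ∞`). -/
noncomputable def niRearr (μ : Measure α) (f : α → ℝ) (t : ℝ) : ℝ≥0∞ :=
  sInf {y : ℝ≥0∞ | ∃ s : ℝ, 0 < s ∧ distrib μ f s ≤ ENNReal.ofReal t ∧ y = ENNReal.ofReal s}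

lemma ndRearr_le_ndRearr {μ : Measure α} {g h : α → ℝ}
    (hgh : ∀ᵐ x ∂μ, |g x| ≤ |h x|) (t : ℝ) :
    ndRearr μ g t ≤ ndRearr μ h t := by
  apply sSup_le_sSup
  rintro y ⟨s, hs, hκ, rfl⟩
  refine ⟨s, hs, lt_of_le_of_lt ?_ hκ, rfl⟩
  exact measure_mono_ae (hgh.mono fun x hx hxs => lt_of_le_of_lt hx hxs)

lemma ndRearr_mono {μ : Measure α} (f : α → ℝ) : Monotone (ndRearr μ f) := by
  intro t₁ t₂ ht
  apply sSup_le_sSup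
  rintro y ⟨s, hs, hκ, rfl⟩
  exact ⟨s, hs, hκ.trans_le (ENNReal.ofReal_le_ofReal ht), rfl⟩

/-- If `f_n ↓ f ≥ 0` μ-a.e., then the nondecreasing rearrangements satisfy `(f_n)_* ↓ f_*`
Lebesgue-a.e. on `(0, ∞)`; more precisely, `(f_n)_*(t) → f_*(t)` at every continuity point
`t ∈ (0, ∞)` of `f_*`. -/
theorem ndRearr_tendsto_of_antitone
    (μ : Measure α) [SigmaFinite μ] (hμ : Nonatomic μ)
    (f : α → ℝ) (F : ℕ → α → ℝ) (hf : Measurable f) (hF : ∀ n, Measurable (F n))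
    (hf0 : 0 ≤ f)
    (hanti : ∀ᵐ x ∂μ, Antitone fun n => F n x)
    (hlim : ∀ᵐ x ∂μ, Tendsto (fun n => F n x) atTop (𝓝 (f x))) :
    (∀ t ∈ Ioi (0 : ℝ), Antitone fun n => ndRearr μ (F n) t) ∧
      (∀ᵐ t ∂(volume.restrict (Ioi (0 : ℝ))),
        Tendsto (fun n => ndRearr μ (F n) t) atTop (𝓝 (ndRearr μ f t))) ∧
      ∀ t ∈ Ioi (0 : ℝ), ContinuousAt (ndRearr μ f) t →
        Tendsto (fun n => ndRearr μ (F n) t) atTop (𝓝 (ndRearr μ f t)) := by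
  -- the a.e. good set
  set S : Set α := {x | ¬ (Antitone (fun n => F n x) ∧
      Tendsto (fun n => F n x) atTop (𝓝 (f x)))} with hS_def
  have hS0 : μ S = 0 := by
    have := hanti.and hlim
    simpa [hS_def, ae_iff] using this
  set N : Set α := toMeasurable μ S with hN_def
  have hN0 : μ N = 0 := by rwa [hN_def, measure_toMeasurable]
  have hGood : ∀ x ∉ N, Antitone (fun n => F n x) ∧
      Tendsto (fun n => F n x) atTop (𝓝 (f x)) := by
    intro x hx
    by_contra h
    exact hx (subset_toMeasurable μ S h)
  have hfF : ∀ x ∉ N, ∀ n, f x ≤ F n x := by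
    intro x hx n
    exact le_of_tendsto (hGood x hx).2 (eventually_atTop.2 ⟨n, fun m hm => (hGood x hx).1 hm⟩)
  -- a.e. |F n| ≤ |F m| for m ≤ n, and |f| ≤ |F n|
  have habs : ∀ n, ∀ x ∉ N, |f x| ≤ |F n x| := by
    intro n x hx
    rw [abs_of_nonneg (hf0 x), abs_of_nonneg ((hf0 x).trans (hfF x hx n))]
    exact hfF x hx n
  have haeN : ∀ᵐ x ∂μ, x ∉ N := by
    rw [ae_iff]; simpa using hN0
  -- Lemma B : κ_f s ≤ ⨆ n, κ_{F n} s
  have hB : ∀ s : ℝ, lowerDistrib μ f s ≤ ⨆ n, lowerDistrib μ (F n) s := by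
    intro s
    set A : ℕ → Set α := fun n => {x | F n x < s} \ N with hA_def
    have hAmono : Monotone A := by
      intro m n hmn x hx
      exact ⟨lt_of_le_of_lt ((hGood x hx.2).1 hmn) hx.1, hx.2⟩
    have hsub : {x | |f x| < s} \ N ⊆ ⋃ n, A n := by
      rintro x ⟨hx1, hx2⟩
      rw [mem_setOf_eq, abs_of_nonneg (hf0 x)] at hx1
      obtain ⟨n, hn⟩ := ((hGood x hx2).2.eventually (Filter.Tendsto.eventually_lt_const hx1
        tendsto_id)).exists
      exact mem_iUnion.2 ⟨n, hn, hx2⟩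
    calc lowerDistrib μ f s = μ ({x | |f x| < s} \ N) := (measure_diff_null hN0).symm
      _ ≤ μ (⋃ n, A n) := measure_mono hsub
      _ = ⨆ n, μ (A n) := (hAmono.directed_le).measure_iUnion
      _ ≤ ⨆ n, lowerDistrib μ (F n) s := by
          refine iSup_mono fun n => measure_mono ?_
          rintro x ⟨hx1, hx2⟩
          rw [mem_setOf_eq, abs_of_nonneg ((hf0 x).trans (hfF x hx2 n))]
          exact hx1
  -- Part 1
  have part1 : ∀ t : ℝ, Antitone fun n => ndRearr μ (F n) t := by
    intro t m n hmn
    refine ndRearr_le_ndRearr (haeN.mono fun x hx => ?_) t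
    rw [abs_of_nonneg ((hf0 x).trans (hfF x hx n)), abs_of_nonneg ((hf0 x).trans (hfF x hx m))]
    exact (hGood x hx).1 hmn
  -- lower bound
  have hlb : ∀ n t, ndRearr μ f t ≤ ndRearr μ (F n) t := fun n t =>
    ndRearr_le_ndRearr (haeN.mono fun x hx => habs n x hx) t
  -- Lemma D : key inequality
  have hD : ∀ t t'' : ℝ, 0 < t → t < t'' →
      (⨅ n, ndRearr μ (F n) t) ≤ ndRearr μ f t'' := by
    intro t t'' ht htt
    by_contra hcon
    push_neg at hcon
    obtain ⟨c, hc1, hc2⟩ := exists_between hcon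
    have hcne : c ≠ ⊤ := (hc2.trans_le le_top).ne
    have hcpos : 0 < c := (zero_le).trans_lt hc1
    set s : ℝ := c.toReal with hs_def
    have hspos : 0 < s := ENNReal.toReal_pos hcpos.ne' hcne
    have hcs : ENNReal.ofReal s = c := ENNReal.ofReal_toReal hcne
    have hks : ∀ n, lowerDistrib μ (F n) s < ENNReal.ofReal t := by
      intro n
      have : c < ndRearr μ (F n) t := hc2.trans_le (iInf_le _ n)
      rw [ndRearr, lt_sSup_iff] at this
      obtain ⟨y, ⟨s', hs', hκ', rfl⟩, hcy⟩ := this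
      have hss' : s ≤ s' := by
        by_contra hss
        push_neg at hss
        exact absurd (hcs ▸ ENNReal.ofReal_le_ofReal hss.le) (not_le.2 hcy)
      refine lt_of_le_of_lt (measure_mono ?_) hκ'
      intro x hx
      exact lt_of_lt_of_le hx hss'
    have hκf : lowerDistrib μ f s < ENNReal.ofReal t'' := by
      refine lt_of_le_of_lt ((hB s).trans (iSup_le fun n => (hks n).le)) ?_
      exact (ENNReal.ofReal_lt_ofReal_iff (ht.trans htt)).2 htt
    have : ENNReal.ofReal s ≤ ndRearr μ f t'' := le_sSup ⟨s, hspos, hκf, rfl⟩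
    rw [hcs] at this
    exact absurd this (not_le.2 hc1)
  -- Part 3
  have part3 : ∀ t ∈ Ioi (0 : ℝ), ContinuousAt (ndRearr μ f) t →
      Tendsto (fun n => ndRearr μ (F n) t) atTop (𝓝 (ndRearr μ f t)) := by
    intro t ht hcont
    have hlim' : Tendsto (fun n => ndRearr μ (F n) t) atTop (𝓝 (⨅ n, ndRearr μ (F n) t)) :=
      tendsto_atTop_iInf (part1 t)
    have heq : (⨅ n, ndRearr μ (F n) t) = ndRearr μ f t := by
      refine le_antisymm ?_ (le_iInf fun n => hlb n t)
      have hcw : Tendsto (ndRearr μ f) (𝓝[>] t) (𝓝 (ndRearr μ f t)) :=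
        (hcont.continuousWithinAt).tendsto
      refine ge_of_tendsto hcw ?_
      filter_upwards [self_mem_nhdsWithin] with t'' htt''
      exact hD t t'' ht htt''
    rwa [heq] at hlim'
  refine ⟨fun t _ => part1 t, ?_, part3⟩
  -- Part 2
  have hcd : {t : ℝ | ¬ ContinuousAt (ndRearr μ f) t}.Countable :=
    (ndRearr_mono f).countable_not_continuousAt
  have hcd0 : ∀ᵐ t ∂(volume.restrict (Ioi (0 : ℝ))), ContinuousAt (ndRearr μ f) t := by
    refine ae_restrict_of_ae ?_
    rw [ae_iff]
    exact hcd.measure_zero _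
  filter_upwards [hcd0, ae_restrict_mem measurableSet_Ioi] with t hct htI
  exact part3 t htI hct
end

section
/- Let (R, μ) be a σ-finite nonatomic measure space and let f, g ≥ 0 be μ-measurable functions on R. Then ∫_R f g dμ ≥ ∫_0^{μ(R)} f^*(t) g_*(t) dt (reverse Hardy–Littlewood inequality). -/
open MeasureTheory Set Filter Topology ENNReal

variable {α : Type*} [MeasurableSpace α]

/-! ### Auxiliary layer-cake lemmas -/

lemma vol_layer (a : ℝ≥0∞) :
    (volume : Measure ℝ) ({s : ℝ | ENNReal.ofReal s < a} ∩ Ioi 0) = a := by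
  rcases eq_or_ne a ∞ with rfl | ha
  · have h : {s : ℝ | ENNReal.ofReal s < ∞} ∩ Ioi 0 = Ioi 0 := by
      ext s; simp [ENNReal.ofReal_lt_top]
    rw [h]; simp
  · have h : {s : ℝ | ENNReal.ofReal s < a} ∩ Ioi 0 = Ioo 0 a.toReal := by
      ext s
      simp only [mem_inter_iff, mem_setOf_eq, mem_Ioi, mem_Ioo]
      constructor
      · rintro ⟨h1, h2⟩; exact ⟨h2, (ENNReal.ofReal_lt_iff_lt_toReal h2.le ha).mp h1⟩
      · rintro ⟨h1, h2⟩; exact ⟨(ENNReal.ofReal_lt_iff_lt_toReal h1.le ha).mpr h2, h1⟩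
    rw [h, Real.volume_Ioo, sub_zero, ENNReal.ofReal_toReal ha]

lemma layer_lintegral (a : ℝ≥0∞) :
    ∫⁻ s in Ioi (0 : ℝ), (if ENNReal.ofReal s < a then (1 : ℝ≥0∞) else 0) = a := by
  have hS : MeasurableSet {s : ℝ | ENNReal.ofReal s < a} :=
    ENNReal.measurable_ofReal measurableSet_Iio
  have h1 : (fun s : ℝ => if ENNReal.ofReal s < a then (1 : ℝ≥0∞) else 0)
      = Set.indicator {s : ℝ | ENNReal.ofReal s < a} (fun _ => (1 : ℝ≥0∞)) := by
    ext s; simp [Set.indicator_apply, mem_setOf_eq]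
  rw [h1, lintegral_indicator hS, Measure.restrict_restrict hS, setLIntegral_one]
  exact vol_layer a

lemma lintegral_mul_layer {β : Type*} [MeasurableSpace β] (ν : Measure β) [SFinite ν]
    {h c : β → ℝ≥0∞} (hh : Measurable h) (hc : Measurable c) :
    ∫⁻ x, h x * c x ∂ν
      = ∫⁻ s in Ioi (0 : ℝ), ∫⁻ x in {x | ENNReal.ofReal s < h x}, c x ∂ν := by
  have hset : MeasurableSet {p : β × ℝ | ENNReal.ofReal p.2 < h p.1} :=
    measurableSet_lt (ENNReal.measurable_ofReal.comp measurable_snd)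
      (hh.comp measurable_fst)
  have hΦ : Measurable fun p : β × ℝ =>
      (if ENNReal.ofReal p.2 < h p.1 then (1 : ℝ≥0∞) else 0) * c p.1 :=
    (Measurable.ite hset measurable_const measurable_const).mul (hc.comp measurable_fst)
  have pt : ∀ x, h x * c x
      = ∫⁻ s in Ioi (0 : ℝ), (if ENNReal.ofReal s < h x then (1 : ℝ≥0∞) else 0) * c x := by
    intro x
    have hm : Measurable fun s : ℝ => if ENNReal.ofReal s < h x then (1 : ℝ≥0∞) else 0 :=
      Measurable.ite (ENNReal.measurable_ofReal measurableSet_Iio) measurable_const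
        measurable_const
    rw [lintegral_mul_const _ hm, layer_lintegral]
  calc ∫⁻ x, h x * c x ∂ν
      = ∫⁻ x, (∫⁻ s in Ioi (0 : ℝ),
          (if ENNReal.ofReal s < h x then (1 : ℝ≥0∞) else 0) * c x) ∂ν :=
        lintegral_congr pt
    _ = ∫⁻ s in Ioi (0 : ℝ), ∫⁻ x,
          (if ENNReal.ofReal s < h x then (1 : ℝ≥0∞) else 0) * c x ∂ν :=
        lintegral_lintegral_swap hΦ.aemeasurable
    _ = ∫⁻ s in Ioi (0 : ℝ), ∫⁻ x in {x | ENNReal.ofReal s < h x}, c x ∂ν := by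
        refine lintegral_congr fun s => ?_
        have : (fun x => (if ENNReal.ofReal s < h x then (1 : ℝ≥0∞) else 0) * c x)
            = Set.indicator {x | ENNReal.ofReal s < h x} c := by
          ext x
          by_cases hx : ENNReal.ofReal s < h x <;>
            simp [Set.indicator_apply, mem_setOf_eq, hx]
        rw [this, lintegral_indicator (measurableSet_lt measurable_const hh)]

lemma lintegral_layer {β : Type*} [MeasurableSpace β] (ν : Measure β) [SFinite ν]
    {h : β → ℝ≥0∞} (hh : Measurable h) :
    ∫⁻ x, h x ∂ν = ∫⁻ s in Ioi (0 : ℝ), ν {x | ENNReal.ofReal s < h x} := by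
  have := lintegral_mul_layer ν hh (measurable_const : Measurable fun _ : β => (1 : ℝ≥0∞))
  simpa [setLIntegral_one] using this

/-- (Reverse Hardy–Littlewood inequality.) For `f, g ≥ 0`,
`∫_R f g dμ ≥ ∫_0^{μ(R)} f^*(t) g_*(t) dt`. -/
theorem reverse_hardy_littlewood
    (μ : Measure α) [SigmaFinite μ] (hμ : Nonatomic μ)
    (f g : α → ℝ) (hf : Measurable f) (hg : Measurable g)
    (hf0 : 0 ≤ f) (hg0 : 0 ≤ g) :
    ∫⁻ t in {t : ℝ | 0 < t ∧ ENNReal.ofReal t < μ univ},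
        niRearr μ f t * ndRearr μ g t ≤
      ∫⁻ x, ENNReal.ofReal (f x) * ENNReal.ofReal (g x) ∂μ := by
  set E : Set ℝ := {t : ℝ | 0 < t ∧ ENNReal.ofReal t < μ univ} with hEdef
  have hE : MeasurableSet E :=
    (measurableSet_Ioi (a := (0 : ℝ))).inter (ENNReal.measurable_ofReal measurableSet_Iio)
  have hFst : Measurable (niRearr μ f) := by
    have : Antitone (niRearr μ f) := by
      intro t t' htt'
      refine sInf_le_sInf ?_
      rintro y ⟨s, hs, hds, rfl⟩
      exact ⟨s, hs, hds.trans (ENNReal.ofReal_le_ofReal htt'), rfl⟩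
    exact this.measurable
  have hGst : Measurable (ndRearr μ g) := by
    have : Monotone (ndRearr μ g) := by
      intro t t' htt'
      refine sSup_le_sSup ?_
      rintro y ⟨s, hs, hds, rfl⟩
      exact ⟨s, hs, hds.trans_le (ENNReal.ofReal_le_ofReal htt'), rfl⟩
    exact this.measurable
  have hF : Measurable fun x => ENNReal.ofReal (f x) := ENNReal.measurable_ofReal.comp hf
  have hG : Measurable fun x => ENNReal.ofReal (g x) := ENNReal.measurable_ofReal.comp hg
  -- the core pointwise inequality
  have core : ∀ s : ℝ, 0 < s → ∀ u : ℝ, 0 < u →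
      ((volume.restrict E).restrict {t | ENNReal.ofReal s < niRearr μ f t})
          {t | ENNReal.ofReal u < ndRearr μ g t}
        ≤ (μ.restrict {x | ENNReal.ofReal s < ENNReal.ofReal (f x)})
          {x | ENNReal.ofReal u < ENNReal.ofReal (g x)} := by
    intro s hs u hu
    set a : ℝ≥0∞ := μ {x | g x ≤ u} with ha
    set b : ℝ≥0∞ := μ {x | s < f x} with hb
    have hAs : MeasurableSet {t | ENNReal.ofReal s < niRearr μ f t} :=
      measurableSet_lt measurable_const hFst
    have hA : MeasurableSet {x | ENNReal.ofReal s < ENNReal.ofReal (f x)} :=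
      measurableSet_lt measurable_const hF
    have hdistrib : distrib μ f s = b := by
      unfold distrib
      congr 1
      ext x
      simp [abs_of_nonneg (hf0 x)]
    -- inclusion into an interval
    have incl : {t | ENNReal.ofReal u < ndRearr μ g t}
        ∩ {t | ENNReal.ofReal s < niRearr μ f t} ∩ E
        ⊆ {t : ℝ | a < ENNReal.ofReal t ∧ ENNReal.ofReal t < b} := by
      rintro t ⟨⟨htu, hts⟩, -⟩
      constructor
      · have htu' : ENNReal.ofReal u < ndRearr μ g t := htu
        rw [ndRearr] at htu'
        obtain ⟨y, ⟨s', hs', hκ, rfl⟩, hy⟩ := lt_sSup_iff.mp htu'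
        have hus' : u < s' := by
          by_contra hcon
          exact absurd (ENNReal.ofReal_le_ofReal (not_lt.mp hcon)) (not_le.mpr hy)
        refine lt_of_le_of_lt ?_ hκ
        refine measure_mono fun x hx => ?_
        have : |g x| = g x := abs_of_nonneg (hg0 x)
        simp only [lowerDistrib, mem_setOf_eq] at *
        rw [this]
        exact lt_of_le_of_lt hx hus'
      · by_contra hcon
        have hb' : distrib μ f s ≤ ENNReal.ofReal t := by
          rw [hdistrib]; exact not_lt.mp hcon
        have : niRearr μ f t ≤ ENNReal.ofReal s := sInf_le ⟨s, hs, hb', rfl⟩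
        exact absurd this (not_le.mpr hts)
    -- interval volume bound
    have vol_bound : (volume : Measure ℝ)
        {t : ℝ | a < ENNReal.ofReal t ∧ ENNReal.ofReal t < b} ≤ b - a := by
      rcases eq_or_ne a ∞ with ha' | ha'
      · have : {t : ℝ | a < ENNReal.ofReal t ∧ ENNReal.ofReal t < b} = ∅ := by
          ext t
          simp only [mem_setOf_eq, mem_empty_iff_false, iff_false, not_and]
          intro hlt
          exact absurd (hlt.trans ENNReal.ofReal_lt_top) (by simp [ha'])
        simp [this]
      rcases eq_or_ne b ∞ with hb' | hb'
      · simp [hb', ha', ENNReal.sub_eq_top_iff]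
      · have hsub : {t : ℝ | a < ENNReal.ofReal t ∧ ENNReal.ofReal t < b}
            ⊆ Ioo a.toReal b.toReal := by
          rintro t ⟨h1, h2⟩
          have ht0 : 0 ≤ t := by
            by_contra hcon
            rw [ENNReal.ofReal_of_nonpos (le_of_not_ge hcon)] at h1
            exact absurd h1 (not_lt.mpr (zero_le (a := a)))
          exact ⟨(ENNReal.lt_ofReal_iff_toReal_lt ha').mp h1,
            (ENNReal.ofReal_lt_iff_lt_toReal ht0 hb').mp h2⟩
        calc (volume : Measure ℝ) {t : ℝ | a < ENNReal.ofReal t ∧ ENNReal.ofReal t < b}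
            ≤ volume (Ioo a.toReal b.toReal) := measure_mono hsub
          _ = ENNReal.ofReal (b.toReal - a.toReal) := by rw [Real.volume_Ioo]
          _ = ENNReal.ofReal b.toReal - ENNReal.ofReal a.toReal :=
              ENNReal.ofReal_sub _ ENNReal.toReal_nonneg
          _ = b - a := by rw [ENNReal.ofReal_toReal hb', ENNReal.ofReal_toReal ha']
    -- the measure-theoretic bound
    have meas_bound : b - a ≤ μ ({x | ENNReal.ofReal u < ENNReal.ofReal (g x)}
        ∩ {x | ENNReal.ofReal s < ENNReal.ofReal (f x)}) := by
      rw [tsub_le_iff_right]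
      have hsubset : {x | s < f x} ⊆ ({x | ENNReal.ofReal u < ENNReal.ofReal (g x)}
          ∩ {x | ENNReal.ofReal s < ENNReal.ofReal (f x)}) ∪ {x | g x ≤ u} := by
        intro x hx
        rcases le_or_gt (g x) u with hgu | hgu
        · exact Or.inr hgu
        · exact Or.inl ⟨(ENNReal.ofReal_lt_ofReal_iff_of_nonneg hu.le).mpr hgu,
            (ENNReal.ofReal_lt_ofReal_iff_of_nonneg hs.le).mpr hx⟩
      exact (measure_mono hsubset).trans (measure_union_le _ _)
    calc ((volume.restrict E).restrict {t | ENNReal.ofReal s < niRearr μ f t})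
          {t | ENNReal.ofReal u < ndRearr μ g t}
        = volume ({t | ENNReal.ofReal u < ndRearr μ g t}
            ∩ {t | ENNReal.ofReal s < niRearr μ f t} ∩ E) := by
          rw [Measure.restrict_apply' hAs, Measure.restrict_apply' hE]
      _ ≤ b - a := (measure_mono incl).trans vol_bound
      _ ≤ μ ({x | ENNReal.ofReal u < ENNReal.ofReal (g x)}
            ∩ {x | ENNReal.ofReal s < ENNReal.ofReal (f x)}) := meas_bound
      _ = (μ.restrict {x | ENNReal.ofReal s < ENNReal.ofReal (f x)})
            {x | ENNReal.ofReal u < ENNReal.ofReal (g x)} :=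
          (Measure.restrict_apply' hA).symm
  -- measurability of the majorant integrands
  have inner_anti : ∀ s : ℝ, Antitone fun u : ℝ =>
      (μ.restrict {x | ENNReal.ofReal s < ENNReal.ofReal (f x)})
        {x | ENNReal.ofReal u < ENNReal.ofReal (g x)} := by
    intro s u u' huu'
    refine measure_mono fun x hx => ?_
    exact lt_of_le_of_lt (ENNReal.ofReal_le_ofReal huu') hx
  have outer_anti : Antitone fun s : ℝ => ∫⁻ u in Ioi (0 : ℝ),
      (μ.restrict {x | ENNReal.ofReal s < ENNReal.ofReal (f x)})
        {x | ENNReal.ofReal u < ENNReal.ofReal (g x)} := by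
    intro s s' hss'
    refine lintegral_mono fun u => ?_
    have hsub : {x | ENNReal.ofReal s' < ENNReal.ofReal (f x)}
        ⊆ {x | ENNReal.ofReal s < ENNReal.ofReal (f x)} := fun x hx =>
      lt_of_le_of_lt (ENNReal.ofReal_le_ofReal hss') hx
    exact Measure.le_iff'.mp (Measure.restrict_mono hsub le_rfl) _
  calc ∫⁻ t in E, niRearr μ f t * ndRearr μ g t
      = ∫⁻ s in Ioi (0 : ℝ), ∫⁻ t in {t | ENNReal.ofReal s < niRearr μ f t},
          ndRearr μ g t ∂(volume.restrict E) :=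
        lintegral_mul_layer (volume.restrict E) hFst hGst
    _ = ∫⁻ s in Ioi (0 : ℝ), ∫⁻ u in Ioi (0 : ℝ),
          ((volume.restrict E).restrict {t | ENNReal.ofReal s < niRearr μ f t})
            {t | ENNReal.ofReal u < ndRearr μ g t} :=
        lintegral_congr fun s => lintegral_layer _ hGst
    _ ≤ ∫⁻ s in Ioi (0 : ℝ), ∫⁻ u in Ioi (0 : ℝ),
          (μ.restrict {x | ENNReal.ofReal s < ENNReal.ofReal (f x)})
            {x | ENNReal.ofReal u < ENNReal.ofReal (g x)} := by
        refine setLIntegral_mono outer_anti.measurable fun s hs => ?_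
        exact setLIntegral_mono (inner_anti s).measurable fun u hu => core s hs u hu
    _ = ∫⁻ s in Ioi (0 : ℝ), ∫⁻ x in {x | ENNReal.ofReal s < ENNReal.ofReal (f x)},
          ENNReal.ofReal (g x) ∂μ :=
        lintegral_congr fun s => (lintegral_layer _ hG).symm
    _ = ∫⁻ x, ENNReal.ofReal (f x) * ENNReal.ofReal (g x) ∂μ :=
        (lintegral_mul_layer μ hF hG).symm
end

section
/- Let μ, ν be nonatomic σ-finite measures on R over the same σ-algebra and let p ∈ [1, ∞). Suppose there exists a finite constant C such that for every ν-measurable function f with ∫_R |f|^p dν < ∞ one has ∫_0^{min{μ(R),1}} f^*(t) dt ≤ C (∫_R |f|^p dν)^{1/p}, where f^* is the nonincreasing rearrangement of f with respect to μ (i.e., L^p(R, ν) embeds into (L^1 + L^∞)(R, μ) with norm at most C). Then μ is absolutely continuous with respect to ν, and A := sup_{E ⊂ R, μ(E) ≤ 1} ( ∫_E (dμ/dν)^{p'} dν )^{1/p'} ≤ C, where dμ/dν is the Radon–Nikodym derivative, p' is the conjugate exponent of p (with the usual modification (∫_E (dμ/dν)^{p'} dν)^{1/p'} = ess sup_E dμ/dν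 when p = 1), and the supremum runs over μ-measurable sets E with μ(E) ≤ 1. -/
open MeasureTheory Set Filter Topology ENNReal

variable {α : Type*} [MeasurableSpace α]

/-- `A = sup { ‖dμ/dν‖_{L^q(E, ν)} : μ(E) ≤ 1 }`. -/
noncomputable def Aconst (μ ν : Measure α) (q : ℝ≥0∞) : ℝ≥0∞ :=
  ⨆ (E : Set α) (_ : MeasurableSet E) (_ : μ E ≤ 1),
    eLpNorm (fun x => (μ.rnDeriv ν x).toReal) q (ν.restrict E)

lemma distrib_antitone (μ : Measure α) (f : α → ℝ) : Antitone (distrib μ f) :=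
  fun _ _ h => measure_mono fun _ hx => lt_of_le_of_lt h hx

lemma volume_le_niRearr (μ : Measure α) (f : α → ℝ) (t : ℝ) :
    volume {s : ℝ | 0 < s ∧ ENNReal.ofReal t < distrib μ f s} ≤ niRearr μ f t := by
  refine le_sInf ?_
  rintro y ⟨s', hs', hds', rfl⟩
  have hsub : {s : ℝ | 0 < s ∧ ENNReal.ofReal t < distrib μ f s} ⊆ Set.Ioo 0 s' := by
    rintro s ⟨hs0, hst⟩
    refine ⟨hs0, ?_⟩
    by_contra h
    push_neg at h
    exact absurd (le_trans (distrib_antitone μ f h) hds') (not_le.mpr hst)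
  calc volume {s : ℝ | 0 < s ∧ ENNReal.ofReal t < distrib μ f s}
      ≤ volume (Set.Ioo 0 s') := measure_mono hsub
    _ = ENNReal.ofReal s' := by rw [Real.volume_Ioo, sub_zero]

lemma slice_volume {a : ℝ≥0∞} (ha : a ≠ ∞) :
    volume {t : ℝ | 0 < t ∧ ENNReal.ofReal t < a} = a := by
  have : {t : ℝ | 0 < t ∧ ENNReal.ofReal t < a} = Set.Ioo 0 a.toReal := by
    ext t
    simp only [Set.mem_setOf_eq, Set.mem_Ioo, and_congr_right_iff]
    intro ht
    rw [ENNReal.ofReal_lt_iff_lt_toReal ht.le ha]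
  rw [this, Real.volume_Ioo, sub_zero, ENNReal.ofReal_toReal ha]

lemma key_lower (μ : Measure α) (f : α → ℝ) :
    ∫⁻ s in Set.Ioi (0:ℝ), min (min (μ Set.univ) 1) (distrib μ f s) ≤
      ∫⁻ t in {t : ℝ | 0 < t ∧ ENNReal.ofReal t < min (μ Set.univ) 1}, niRearr μ f t := by
  set m := min (μ Set.univ) 1 with hm
  have hm_ne : m ≠ ∞ := ne_top_of_le_ne_top ENNReal.one_ne_top (min_le_right _ _)
  have hdm : Measurable (distrib μ f) := (distrib_antitone μ f).measurable
  set P : Set (ℝ × ℝ) :=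
    {p | (0 < p.1 ∧ ENNReal.ofReal p.1 < m) ∧ 0 < p.2 ∧ ENNReal.ofReal p.1 < distrib μ f p.2}
    with hP
  have hPm : MeasurableSet P := by
    have A : MeasurableSet {p : ℝ × ℝ | 0 < p.1} :=
      measurableSet_lt measurable_const measurable_fst
    have B : MeasurableSet {p : ℝ × ℝ | ENNReal.ofReal p.1 < m} :=
      measurableSet_lt measurable_fst.ennreal_ofReal measurable_const
    have Cs : MeasurableSet {p : ℝ × ℝ | 0 < p.2} :=
      measurableSet_lt measurable_const measurable_snd
    have D : MeasurableSet {p : ℝ × ℝ | ENNReal.ofReal p.1 < distrib μ f p.2} :=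
      measurableSet_lt measurable_fst.ennreal_ofReal (hdm.comp measurable_snd)
    exact (A.inter B).inter (Cs.inter D)
  have hS : MeasurableSet {t : ℝ | 0 < t ∧ ENNReal.ofReal t < m} := by
    have : {t : ℝ | 0 < t ∧ ENNReal.ofReal t < m} = Set.Ioo 0 m.toReal := by
      ext t
      simp only [Set.mem_setOf_eq, Set.mem_Ioo, and_congr_right_iff]
      intro ht
      rw [ENNReal.ofReal_lt_iff_lt_toReal ht.le hm_ne]
    rw [this]; exact measurableSet_Ioo
  have h2 := Measure.prod_apply (μ := volume) (ν := volume) hPm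
  have h3 := Measure.prod_apply_symm (μ := volume) (ν := volume) hPm
  calc ∫⁻ s in Set.Ioi (0:ℝ), min m (distrib μ f s)
      = ∫⁻ s, (Set.Ioi (0:ℝ)).indicator (fun s => min m (distrib μ f s)) s := by
        rw [lintegral_indicator measurableSet_Ioi]
    _ = ∫⁻ s, volume ((fun t => (t, s)) ⁻¹' P) := by
        refine lintegral_congr fun s => ?_
        by_cases hs : 0 < s
        · rw [Set.indicator_of_mem (Set.mem_Ioi.mpr hs)]
          have hset : ((fun t => (t, s)) ⁻¹' P) =
              {t : ℝ | 0 < t ∧ ENNReal.ofReal t < min m (distrib μ f s)} := by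
            ext t
            simp only [hP, Set.mem_preimage, Set.mem_setOf_eq, lt_min_iff]
            tauto
          rw [hset, slice_volume (ne_top_of_le_ne_top hm_ne (min_le_left _ _))]
        · rw [Set.indicator_of_notMem (fun h => hs (Set.mem_Ioi.mp h))]
          have hset : ((fun t => (t, s)) ⁻¹' P) = ∅ := by
            ext t
            simp only [hP, Set.mem_preimage, Set.mem_setOf_eq, Set.mem_empty_iff_false,
              iff_false]
            rintro ⟨-, hs', -⟩
            exact hs hs'
          rw [hset, measure_empty]
    _ = (volume.prod volume) P := h3.symm
    _ = ∫⁻ t, volume (Prod.mk t ⁻¹' P) := h2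
    _ ≤ ∫⁻ t, {t : ℝ | 0 < t ∧ ENNReal.ofReal t < m}.indicator (niRearr μ f) t := by
        refine lintegral_mono fun t => ?_
        by_cases ht : 0 < t ∧ ENNReal.ofReal t < m
        · rw [Set.indicator_of_mem (show t ∈ {t : ℝ | 0 < t ∧ ENNReal.ofReal t < m} from ht)]
          refine le_trans (measure_mono ?_) (volume_le_niRearr μ f t)
          rintro s hs
          exact hs.2
        · rw [Set.indicator_of_notMem (show t ∉ {t : ℝ | 0 < t ∧ ENNReal.ofReal t < m} from ht)]
          have hset : (Prod.mk t ⁻¹' P) = ∅ := by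
            ext s
            simp only [hP, Set.mem_preimage, Set.mem_setOf_eq, Set.mem_empty_iff_false,
              iff_false]
            rintro ⟨h1, -⟩
            exact ht h1
          rw [hset, measure_empty]
    _ = ∫⁻ t in {t : ℝ | 0 < t ∧ ENNReal.ofReal t < m}, niRearr μ f t := by
        rw [lintegral_indicator hS]

lemma setLintegral_le_layer (μ : Measure α) (f : α → ℝ) (hf : Measurable f)
    {E : Set α} (hE : MeasurableSet E) (hE1 : μ E ≤ 1) :
    ∫⁻ x in E, ENNReal.ofReal |f x| ∂μ ≤
      ∫⁻ s in Set.Ioi (0:ℝ), min (min (μ Set.univ) 1) (distrib μ f s) := by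
  rw [lintegral_eq_lintegral_meas_lt (μ.restrict E)
    (Filter.Eventually.of_forall fun x => abs_nonneg (f x)) hf.abs.aemeasurable]
  refine lintegral_mono fun s => ?_
  have hms : MeasurableSet {a | s < |f a|} := measurableSet_lt measurable_const hf.abs
  rw [Measure.restrict_apply hms]
  refine le_min (le_min ?_ ?_) ?_
  · exact le_trans (measure_mono (Set.inter_subset_right)) (measure_mono (Set.subset_univ E))
  · exact le_trans (measure_mono (Set.inter_subset_right)) hE1
  · exact measure_mono Set.inter_subset_left

lemma ae_bound_of_tests (ν : Measure α) [SigmaFinite ν] (g : α → ℝ≥0∞) (hg : Measurable g)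
    {C : ℝ≥0∞} (hC : C ≠ ∞) {E : Set α} (hE : MeasurableSet E)
    (hW : ∀ F, F ⊆ E → MeasurableSet F → ν F < ∞ → ∫⁻ x in F, g x ∂ν ≤ C * ν F) :
    ν (E ∩ {x | C < g x}) = 0 := by
  by_contra hne
  -- decompose into levels C + (n+1)⁻¹
  have hcover : E ∩ {x | C < g x} ⊆
      ⋃ n : ℕ, E ∩ {x | C + ((n : ℝ≥0∞) + 1)⁻¹ ≤ g x} := by
    rintro x ⟨hxE, hxg⟩
    have hxg : C < g x := hxg
    rcases eq_or_ne (g x) ∞ with hgx | hgx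
    · exact Set.mem_iUnion.mpr ⟨0, hxE, show _ ≤ g x by rw [hgx]; exact le_top⟩
    · have hpos : (0:ℝ≥0∞) < g x - C := tsub_pos_iff_lt.mpr hxg
      obtain ⟨n, hn⟩ := ENNReal.exists_inv_nat_lt hpos.ne'
      refine Set.mem_iUnion.mpr ⟨n, hxE, ?_⟩
      have h1 : ((n : ℝ≥0∞) + 1)⁻¹ ≤ ((n : ℝ≥0∞))⁻¹ :=
        ENNReal.inv_le_inv.mpr (le_add_right le_rfl)
      calc C + ((n : ℝ≥0∞) + 1)⁻¹ ≤ C + (g x - C) :=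
            add_le_add_right (le_trans h1 hn.le) C
        _ = g x := add_tsub_cancel_of_le hxg.le
  have : ∃ n : ℕ, ν (E ∩ {x | C + ((n : ℝ≥0∞) + 1)⁻¹ ≤ g x}) ≠ 0 := by
    by_contra hall
    push_neg at hall
    exact hne (measure_mono_null hcover (measure_iUnion_null hall))
  obtain ⟨n, hn⟩ := this
  set δ : ℝ≥0∞ := ((n : ℝ≥0∞) + 1)⁻¹ with hδ
  have hδpos : 0 < δ := ENNReal.inv_pos.mpr (by simp)
  set F : Set α := E ∩ {x | C + δ ≤ g x} with hF
  have hFm : MeasurableSet F := hE.inter (measurableSet_le measurable_const hg)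
  -- find a finite-measure positive piece
  have : ∃ k : ℕ, ν (F ∩ spanningSets ν k) ≠ 0 := by
    by_contra hall
    push_neg at hall
    have : ν F = 0 := by
      have hcov : F ⊆ ⋃ k, F ∩ spanningSets ν k := by
        intro x hx
        have : x ∈ ⋃ k, spanningSets ν k := by
          rw [iUnion_spanningSets]; trivial
        rcases Set.mem_iUnion.mp this with ⟨k, hk⟩
        exact Set.mem_iUnion.mpr ⟨k, hx, hk⟩
      exact measure_mono_null hcov (measure_iUnion_null hall)
    exact hn this
  obtain ⟨k, hk⟩ := this
  set F' : Set α := F ∩ spanningSets ν k with hF'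
  have hF'm : MeasurableSet F' := hFm.inter (measurableSet_spanningSets ν k)
  have hF'fin : ν F' < ∞ :=
    lt_of_le_of_lt (measure_mono Set.inter_subset_right) (measure_spanningSets_lt_top ν k)
  have hF'E : F' ⊆ E := fun x hx => hx.1.1
  have hIb := hW F' hF'E hF'm hF'fin
  have hlow : (C + δ) * ν F' ≤ ∫⁻ x in F', g x ∂ν := by
    calc (C + δ) * ν F' = ∫⁻ _ in F', (C + δ) ∂ν := (setLIntegral_const _ _).symm
      _ ≤ ∫⁻ x in F', g x ∂ν := by
          refine setLIntegral_mono hg fun x hx => ?_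
          exact hx.1.2
  have hfin : C * ν F' ≠ ∞ := ENNReal.mul_ne_top hC hF'fin.ne
  have : (C + δ) * ν F' ≤ C * ν F' := le_trans hlow hIb
  rw [add_mul] at this
  have : δ * ν F' ≤ 0 := by
    have h2 : C * ν F' + δ * ν F' ≤ C * ν F' + 0 := by simpa using this
    exact (ENNReal.add_le_add_iff_left hfin).mp h2
  have : δ * ν F' = 0 := le_antisymm this zero_le
  rcases mul_eq_zero.mp this with h | h
  · exact hδpos.ne' h
  · exact hk h

lemma case_top (ν : Measure α) [SigmaFinite ν] (g : α → ℝ≥0∞) (hg : Measurable g)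
    {C : ℝ≥0∞} (hC : C ≠ ∞) {E : Set α} (hE : MeasurableSet E)
    (hW : ∀ f : α → ℝ, Measurable f → eLpNorm f 1 ν < ∞ →
      ∫⁻ x in E, g x * ENNReal.ofReal |f x| ∂ν ≤ C * eLpNorm f 1 ν) :
    eLpNorm (fun x => (g x).toReal) ∞ (ν.restrict E) ≤ C := by
  have hW' : ∀ F, F ⊆ E → MeasurableSet F → ν F < ∞ → ∫⁻ x in F, g x ∂ν ≤ C * ν F := by
    intro F hFE hFm hFfin
    set f : α → ℝ := F.indicator (fun _ => (1:ℝ)) with hf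
    have hfm : Measurable f := measurable_const.indicator hFm
    have hnorm : eLpNorm f 1 ν = ν F := by
      rw [eLpNorm_one_eq_lintegral_enorm]
      have : ∀ x, ‖f x‖ₑ = F.indicator (fun _ => (1:ℝ≥0∞)) x := by
        intro x
        by_cases hx : x ∈ F <;>
          simp [hf, Set.indicator_of_mem, Set.indicator_of_notMem, hx]
      rw [lintegral_congr this, lintegral_indicator hFm, setLIntegral_const, one_mul]
    have hint : ∫⁻ x in E, g x * ENNReal.ofReal |f x| ∂ν = ∫⁻ x in F, g x ∂ν := by
      have h1 : ∀ x, g x * ENNReal.ofReal |f x| = F.indicator g x := by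
        intro x
        by_cases hx : x ∈ F <;>
          simp [hf, Set.indicator_of_mem, Set.indicator_of_notMem, hx]
      rw [lintegral_congr h1, lintegral_indicator hFm, Measure.restrict_restrict hFm,
        Set.inter_eq_self_of_subset_left hFE]
    have := hW f hfm (by rw [hnorm]; exact hFfin)
    rwa [hint, hnorm] at this
  have hnull : ν (E ∩ {x | C < g x}) = 0 := ae_bound_of_tests ν g hg hC hE hW'
  rw [eLpNorm_exponent_top, eLpNormEssSup]
  have hae : ∀ᵐ x ∂(ν.restrict E), ‖(g x).toReal‖ₑ ≤ C := by
    rw [ae_restrict_iff' hE, ae_iff]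
    refine measure_mono_null ?_ hnull
    intro x hx
    simp only [Set.mem_setOf_eq, not_forall] at hx
    obtain ⟨hxE, hxg⟩ := hx
    refine ⟨hxE, ?_⟩
    have h1 : ‖(g x).toReal‖ₑ = ENNReal.ofReal ((g x).toReal) :=
      Real.enorm_eq_ofReal ENNReal.toReal_nonneg
    have h2 : ‖(g x).toReal‖ₑ ≤ g x := h1.le.trans ENNReal.ofReal_toReal_le
    exact lt_of_lt_of_le (not_le.mp hxg) h2
  exact essSup_le_of_ae_le C hae

lemma case_finite (ν : Measure α) [SigmaFinite ν] (g : α → ℝ≥0∞) (hg : Measurable g)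
    {C : ℝ≥0∞} {E : Set α} (hE : MeasurableSet E)
    {pr qr : ℝ} (hpr : 1 < pr) (hqr : 1 < qr) (hsum : 1/pr + 1/qr = 1)
    (p q : ℝ≥0∞) (hp0 : p ≠ 0) (hp' : p ≠ ∞) (hptr : p.toReal = pr)
    (hq0 : q ≠ 0) (hq' : q ≠ ∞) (hqtr : q.toReal = qr)
    (hgfin : ∀ᵐ x ∂ν, g x < ∞)
    (hW : ∀ f : α → ℝ, Measurable f → eLpNorm f p ν < ∞ →
      ∫⁻ x in E, g x * ENNReal.ofReal |f x| ∂ν ≤ C * eLpNorm f p ν) :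
    eLpNorm (fun x => (g x).toReal) q (ν.restrict E) ≤ C := by
  have hpr0 : (0:ℝ) < pr := zero_lt_one.trans hpr
  have hqr0 : (0:ℝ) < qr := zero_lt_one.trans hqr
  have hqr1 : (0:ℝ) ≤ qr - 1 := by linarith
  have hmul : qr + pr = pr * qr := by
    field_simp at hsum
    linarith
  have hq_eq : (qr - 1) * pr = qr := by nlinarith
  set A : ℕ → Set α := spanningSets ν with hA
  have hEnm : ∀ n, MeasurableSet (E ∩ A n) := fun n =>
    hE.inter (measurableSet_spanningSets ν n)
  set I : ℕ → ℝ≥0∞ := fun n => ∫⁻ x in E ∩ A n, (min (g x) n) ^ qr ∂ν with hI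
  have hmeas_min : ∀ n : ℕ, Measurable fun x => (min (g x) (n:ℝ≥0∞)) ^ qr :=
    fun n => ENNReal.continuous_rpow_const.measurable.comp (hg.min measurable_const)
  have hmeas_min' : ∀ n : ℕ, Measurable fun x => (min (g x) (n:ℝ≥0∞)) ^ (qr - 1) :=
    fun n => ENNReal.continuous_rpow_const.measurable.comp (hg.min measurable_const)
  have hmin_ne_top : ∀ n : ℕ, ∀ x, min (g x) (n:ℝ≥0∞) ≠ ∞ :=
    fun n x => ne_top_of_le_ne_top (ENNReal.natCast_ne_top n) (min_le_right _ _)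
  -- the test functions
  set f : ℕ → α → ℝ := fun n => (E ∩ A n).indicator
    (fun x => ((min (g x) (n:ℝ≥0∞)) ^ (qr - 1)).toReal) with hfdef
  have hfm : ∀ n, Measurable (f n) := fun n => ((hmeas_min' n).ennreal_toReal).indicator (hEnm n)
  have hofReal : ∀ n x, ENNReal.ofReal |f n x| =
      (E ∩ A n).indicator (fun x => (min (g x) (n:ℝ≥0∞)) ^ (qr - 1)) x := by
    intro n x
    by_cases hx : x ∈ E ∩ A n
    · rw [hfdef]
      simp only [Set.indicator_of_mem hx]
      rw [abs_of_nonneg ENNReal.toReal_nonneg,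
        ENNReal.ofReal_toReal (ENNReal.rpow_ne_top_of_nonneg hqr1 (hmin_ne_top n x))]
    · rw [hfdef]
      simp only [Set.indicator_of_notMem hx]
      simp
  have hIfin : ∀ n, I n ≠ ∞ := by
    intro n
    have : I n ≤ (n:ℝ≥0∞) ^ qr * ν (E ∩ A n) := by
      rw [hI]
      calc ∫⁻ x in E ∩ A n, (min (g x) (n:ℝ≥0∞)) ^ qr ∂ν
          ≤ ∫⁻ _ in E ∩ A n, (n:ℝ≥0∞) ^ qr ∂ν := by
            refine lintegral_mono fun x => ?_
            exact ENNReal.rpow_le_rpow (min_le_right _ _) hqr0.le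
        _ = (n:ℝ≥0∞) ^ qr * ν (E ∩ A n) := setLIntegral_const _ _
    refine ne_top_of_le_ne_top (ENNReal.mul_ne_top
      (ENNReal.rpow_ne_top_of_nonneg hqr0.le (ENNReal.natCast_ne_top n)) ?_) this
    exact (lt_of_le_of_lt (measure_mono Set.inter_subset_right)
      (measure_spanningSets_lt_top ν n)).ne
  have heLp : ∀ n, eLpNorm (f n) p ν = (I n) ^ (1/pr) := by
    intro n
    rw [eLpNorm_eq_lintegral_rpow_enorm_toReal hp0 hp', hptr]
    congr 1
    have : ∀ x, ‖f n x‖ₑ ^ pr =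
        (E ∩ A n).indicator (fun x => (min (g x) (n:ℝ≥0∞)) ^ qr) x := by
      intro x
      rw [Real.enorm_eq_ofReal_abs, hofReal n x]
      by_cases hx : x ∈ E ∩ A n
      · simp only [Set.indicator_of_mem hx]
        rw [← ENNReal.rpow_mul, hq_eq]
      · simp only [Set.indicator_of_notMem hx]
        exact ENNReal.zero_rpow_of_pos hpr0
    rw [lintegral_congr this, lintegral_indicator (hEnm n)]
  have hstep3 : ∀ n, I n ≤ C * (I n) ^ (1/pr) := by
    intro n
    have hfin : eLpNorm (f n) p ν < ∞ := by
      rw [heLp n]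
      exact ENNReal.rpow_lt_top_of_nonneg (by positivity) (hIfin n)
    have hWn := hW (f n) (hfm n) hfin
    rw [heLp n] at hWn
    refine le_trans ?_ hWn
    have hpoint : ∀ x, (E ∩ A n).indicator (fun x => (min (g x) (n:ℝ≥0∞)) ^ qr) x ≤
        g x * ENNReal.ofReal |f n x| := by
      intro x
      rw [hofReal n x]
      by_cases hx : x ∈ E ∩ A n
      · simp only [Set.indicator_of_mem hx]
        calc (min (g x) (n:ℝ≥0∞)) ^ qr
            = (min (g x) (n:ℝ≥0∞)) ^ (1 + (qr - 1)) := by ring_nf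
          _ = (min (g x) (n:ℝ≥0∞)) ^ (1:ℝ) * (min (g x) (n:ℝ≥0∞)) ^ (qr - 1) :=
              ENNReal.rpow_add_of_nonneg _ _ zero_le_one hqr1
          _ ≤ g x * (min (g x) (n:ℝ≥0∞)) ^ (qr - 1) := by
              rw [ENNReal.rpow_one]
              exact mul_le_mul_left (min_le_left _ _) _
      · simp only [Set.indicator_of_notMem hx, mul_zero]
        exact le_rfl
    calc I n = ∫⁻ x in E, (E ∩ A n).indicator (fun x => (min (g x) (n:ℝ≥0∞)) ^ qr) x ∂ν := by
          rw [lintegral_indicator (hEnm n), Measure.restrict_restrict (hEnm n),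
            Set.inter_eq_self_of_subset_left (Set.inter_subset_left)]
      _ ≤ ∫⁻ x in E, g x * ENNReal.ofReal |f n x| ∂ν := lintegral_mono hpoint
  have hstep4 : ∀ n, I n ≤ C ^ qr := by
    intro n
    rcases eq_or_ne (I n) 0 with h0 | h0
    · rw [h0]; exact zero_le
    · have h1 : (I n) ^ (1/pr) ≠ 0 :=
        (ENNReal.rpow_pos (pos_iff_ne_zero.mpr h0) (hIfin n)).ne'
      have h2 : (I n) ^ (1/pr) ≠ ∞ := ENNReal.rpow_ne_top_of_nonneg (by positivity) (hIfin n)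
      have hsplit : I n = (I n) ^ (1/pr) * (I n) ^ (1/qr) := by
        rw [← ENNReal.rpow_add _ _ h0 (hIfin n), hsum, ENNReal.rpow_one]
      have hiq : (I n) ^ (1/qr) ≤ C := by
        have h3 := hstep3 n
        rw [mul_comm C _] at h3
        exact (ENNReal.mul_le_mul_iff_right h1 h2).mp (le_trans hsplit.ge h3)
      calc I n = ((I n) ^ (1/qr)) ^ qr := by
            rw [← ENNReal.rpow_mul, one_div_mul_cancel hqr0.ne', ENNReal.rpow_one]
        _ ≤ C ^ qr := ENNReal.rpow_le_rpow hiq hqr0.le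
  -- monotone convergence
  set h : ℕ → α → ℝ≥0∞ := fun n =>
    (E ∩ A n).indicator (fun x => (min (g x) (n:ℝ≥0∞)) ^ qr) with hh
  have hhm : ∀ n, Measurable (h n) := fun n => (hmeas_min n).indicator (hEnm n)
  have hhmono : Monotone h := by
    intro n m hnm x
    by_cases hx : x ∈ E ∩ A n
    · have hx' : x ∈ E ∩ A m := Set.mem_inter hx.1 (monotone_spanningSets ν hnm hx.2)
      rw [hh]
      simp only [Set.indicator_of_mem hx, Set.indicator_of_mem hx']
      exact ENNReal.rpow_le_rpow (min_le_min le_rfl (Nat.cast_le.mpr hnm)) hqr0.le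
    · rw [hh]
      simp only [Set.indicator_of_notMem hx]
      exact zero_le
  have hsup : ∀ᵐ x ∂ν, (⨆ n, h n x) = E.indicator (fun x => g x ^ qr) x := by
    filter_upwards [hgfin] with x hx
    by_cases hxE : x ∈ E
    · have hxA : x ∈ ⋃ k, A k := by rw [hA, iUnion_spanningSets]; trivial
      obtain ⟨N, hN⟩ := Set.mem_iUnion.mp hxA
      obtain ⟨M, hM⟩ := ENNReal.exists_nat_gt hx.ne
      apply le_antisymm
      · refine iSup_le fun n => ?_
        rw [Set.indicator_of_mem hxE]
        by_cases hxn : x ∈ E ∩ A n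
        · rw [hh]; simp only [Set.indicator_of_mem hxn]
          exact ENNReal.rpow_le_rpow (min_le_left _ _) hqr0.le
        · rw [hh]; simp only [Set.indicator_of_notMem hxn]; exact zero_le
      · rw [Set.indicator_of_mem hxE]
        have hk : x ∈ E ∩ A (max N M) :=
          Set.mem_inter hxE (monotone_spanningSets ν (le_max_left N M) hN)
        have hmin : min (g x) ((max N M : ℕ) : ℝ≥0∞) = g x := by
          refine min_eq_left ?_
          exact le_trans hM.le (Nat.cast_le.mpr (le_max_right N M))
        have : g x ^ qr = h (max N M) x := by
          rw [hh]; simp only [Set.indicator_of_mem hk, hmin]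
        rw [this]
        exact le_iSup (fun n => h n x) (max N M)
    · have : ∀ n, h n x = 0 := by
        intro n
        rw [hh]
        exact Set.indicator_of_notMem (fun hc => hxE hc.1) _
      simp only [this, Set.indicator_of_notMem hxE, iSup_const]
  have hItot : ∫⁻ x in E, g x ^ qr ∂ν ≤ C ^ qr := by
    have h1 : ∫⁻ x in E, g x ^ qr ∂ν = ∫⁻ x, E.indicator (fun x => g x ^ qr) x ∂ν := by
      rw [lintegral_indicator hE]
    have h2 : ∫⁻ x, E.indicator (fun x => g x ^ qr) x ∂ν = ∫⁻ x, ⨆ n, h n x ∂ν :=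
      (lintegral_congr_ae hsup).symm
    have h3 : ∫⁻ x, ⨆ n, h n x ∂ν = ⨆ n, I n := by
      rw [lintegral_iSup hhm hhmono]
      refine iSup_congr fun n => ?_
      rw [hh, lintegral_indicator (hEnm n)]
    rw [h1, h2, h3]
    exact iSup_le hstep4
  -- conclude
  rw [eLpNorm_eq_lintegral_rpow_enorm_toReal hq0 hq', hqtr]
  have hpt : ∀ x, ‖(g x).toReal‖ₑ ^ qr ≤ g x ^ qr := by
    intro x
    refine ENNReal.rpow_le_rpow ?_ hqr0.le
    rw [Real.enorm_eq_ofReal ENNReal.toReal_nonneg]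
    exact ENNReal.ofReal_toReal_le
  calc (∫⁻ x, ‖(g x).toReal‖ₑ ^ qr ∂(ν.restrict E)) ^ (1/qr)
      ≤ (∫⁻ x, g x ^ qr ∂(ν.restrict E)) ^ (1/qr) :=
        ENNReal.rpow_le_rpow (lintegral_mono hpt) (by positivity)
    _ ≤ (C ^ qr) ^ (1/qr) := ENNReal.rpow_le_rpow hItot (by positivity)
    _ = C := by rw [← ENNReal.rpow_mul, mul_one_div_cancel hqr0.ne', ENNReal.rpow_one]


/-- If `L^p(R, ν) ↪ (L^1 + L^∞)(R, μ)` with norm at most `C < ∞`, then `μ ≪ ν` and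
`A = sup_{μ(E) ≤ 1} ‖dμ/dν‖_{L^{p'}(E, ν)} ≤ C`. -/
theorem absolutelyContinuous_and_Aconst_le_of_embedding
    (μ ν : Measure α) [SigmaFinite μ] [SigmaFinite ν]
    (hμna : Nonatomic μ) (hνna : Nonatomic ν)
    (p q : ℝ≥0∞) (hp : 1 ≤ p) (hp' : p ≠ ∞) (hpq : 1 / p + 1 / q = 1)
    (C : ℝ≥0∞) (hC : C ≠ ∞)
    (hemb : ∀ f : α → ℝ, Measurable f → eLpNorm f p ν < ∞ →
      ∫⁻ t in {t : ℝ | 0 < t ∧ ENNReal.ofReal t < min (μ univ) 1}, niRearr μ f t ≤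
        C * eLpNorm f p ν) :
    μ ≪ ν ∧ Aconst μ ν q ≤ C := by
  have hp0 : p ≠ 0 := fun h => by simp [h] at hp
  set g : α → ℝ≥0∞ := μ.rnDeriv ν with hgdef
  have hg : Measurable g := Measure.measurable_rnDeriv μ ν
  have hstar : ∀ f : α → ℝ, Measurable f → eLpNorm f p ν < ∞ →
      ∫⁻ s in Set.Ioi (0:ℝ), min (min (μ Set.univ) 1) (distrib μ f s) ≤ C * eLpNorm f p ν :=
    fun f hf hfp => le_trans (key_lower μ f) (hemb f hf hfp)
  -- Part 1: absolute continuity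
  have hac : μ ≪ ν := by
    refine Measure.AbsolutelyContinuous.mk fun E hE hνE => ?_
    set f : α → ℝ := E.indicator (fun _ => (1:ℝ)) with hf
    have hfm : Measurable f := measurable_const.indicator hE
    have hfz : f =ᵐ[ν] 0 := by
      have h0 : ∀ᵐ x ∂ν, x ∉ E := by
        rw [ae_iff]
        simpa using hνE
      filter_upwards [h0] with x hx
      simp [hf, Set.indicator_of_notMem hx]
    have hnorm : eLpNorm f p ν = 0 := by
      rw [eLpNorm_congr_ae hfz, eLpNorm_zero]
    have hle := hstar f hfm (by rw [hnorm]; exact ENNReal.zero_lt_top)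
    rw [hnorm, mul_zero] at hle
    set m := min (μ Set.univ) 1 with hm
    have hdist : ∀ s ∈ Set.Ioo (0:ℝ) 1, distrib μ f s = μ E := by
      intro s hs
      have : {x | s < |f x|} = E := by
        ext x
        by_cases hx : x ∈ E <;>
          simp [hf, Set.indicator_of_mem, Set.indicator_of_notMem, hx, hs.1.le, hs.2,
            abs_of_nonneg, not_lt.mpr hs.1.le]
      rw [distrib, this]
    have hi : min m (μ E) ≤ 0 := by
      calc min m (μ E) = ∫⁻ _ in Set.Ioo (0:ℝ) 1, min m (μ E) := by
            rw [setLIntegral_const, Real.volume_Ioo]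
            norm_num
        _ = ∫⁻ s in Set.Ioo (0:ℝ) 1, min m (distrib μ f s) := by
            refine setLIntegral_congr_fun measurableSet_Ioo ?_
            intro s hs
            simp only
            rw [hdist s hs]
        _ ≤ ∫⁻ s in Set.Ioi (0:ℝ), min m (distrib μ f s) :=
            lintegral_mono_set (fun s hs => hs.1)
        _ ≤ 0 := hle
    by_contra hne
    have hpos : 0 < μ E := pos_iff_ne_zero.mpr hne
    have : 0 < min m (μ E) :=
      lt_min (lt_min (lt_of_lt_of_le hpos (measure_mono (Set.subset_univ E))) zero_lt_one) hpos
    exact absurd (le_antisymm hi zero_le) this.ne'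
  refine ⟨hac, ?_⟩
  rw [Aconst]
  -- Part 2
  have hW : ∀ E : Set α, MeasurableSet E → μ E ≤ 1 →
      ∀ f : α → ℝ, Measurable f → eLpNorm f p ν < ∞ →
        ∫⁻ x in E, g x * ENNReal.ofReal |f x| ∂ν ≤ C * eLpNorm f p ν := by
    intro E hE hE1 f hf hfp
    have hwd : ∫⁻ x in E, ENNReal.ofReal |f x| ∂μ =
        ∫⁻ x in E, g x * ENNReal.ofReal |f x| ∂ν := by
      conv_lhs => rw [← Measure.withDensity_rnDeriv_eq μ ν hac]
      rw [MeasureTheory.restrict_withDensity hE,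
        lintegral_withDensity_eq_lintegral_mul _ (Measure.measurable_rnDeriv μ ν)
          hf.abs.ennreal_ofReal]
      rfl
    rw [← hwd]
    exact le_trans (setLintegral_le_layer μ f hf hE hE1) (hstar f hf hfp)
  refine iSup_le fun E => iSup_le fun hE => iSup_le fun hE1 => ?_
  rcases eq_or_ne q ∞ with hq | hq
  · -- q = ∞, p = 1
    have hp1 : p = 1 := by
      rw [hq] at hpq
      simp only [one_div, ENNReal.inv_top, add_zero] at hpq
      exact ENNReal.inv_eq_one.mp hpq
    rw [hq]
    refine case_top ν g hg hC hE ?_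
    intro f hf hfp
    have := hW E hE hE1 f hf (by rwa [hp1])
    rwa [hp1] at this
  · -- q finite
    have hq0 : q ≠ 0 := by
      intro h
      rw [h] at hpq
      simp at hpq
    have hp1 : 1 < p := by
      rcases lt_or_eq_of_le hp with h | h
      · exact h
      · exfalso
        rw [← h] at hpq
        simp only [one_div, inv_one] at hpq
        have h0 : (1:ℝ≥0∞) + q⁻¹ = 1 + 0 := by simpa using hpq
        have := (ENNReal.add_right_inj ENNReal.one_ne_top).mp h0
        exact hq (ENNReal.inv_eq_zero.mp this)
    set pr := p.toReal with hpr'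
    set qr := q.toReal with hqr'
    have hprr : 1 < pr := by
      have := (ENNReal.toReal_lt_toReal ENNReal.one_ne_top hp').mpr hp1
      simpa using this
    have hqr0 : 0 < qr := ENNReal.toReal_pos hq0 hq
    have h1p : (1/p) ≠ ∞ := by
      simp [ENNReal.div_eq_top, hp0]
    have h1q : (1/q) ≠ ∞ := by
      simp [ENNReal.div_eq_top, hq0]
    have hsum : 1/pr + 1/qr = 1 := by
      have := congrArg ENNReal.toReal hpq
      rwa [ENNReal.toReal_add h1p h1q, ENNReal.toReal_div, ENNReal.toReal_div,
        ENNReal.toReal_one] at this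
    have hqrr : 1 < qr := by
      have hpr0 : (0:ℝ) < pr := by linarith
      have h1 : 1/pr < 1 := by rw [div_lt_one hpr0]; exact hprr
      have h2 : 0 < (1:ℝ)/pr := by positivity
      have h3 : 1/qr < 1 := by linarith
      exact (div_lt_one hqr0).mp h3
    have hgfin : ∀ᵐ x ∂ν, g x < ∞ := Measure.rnDeriv_lt_top μ ν
    exact case_finite ν g hg hE hprr hqrr hsum p q hp0 hp' rfl hq0 hq rfl hgfin
      (hW E hE hE1)
end

section
/- Let (R, μ) be a σ-finite nonatomic measure space, p ∈ (0, ∞), and v : R → [0, ∞) a μ-measurable function. Then for every μ-measurable function f, ( ∫_0^∞ f^*(t)^p v_*(t) dt )^{1/p} ≤ ( ∫_R |f(x)|^p v(x) dμ(x) )^{1/p}, where f^* is the nonincreasing rearrangement of f and v_* the nondecreasing rearrangement of v, both with respect to μ. -/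
open MeasureTheory Set Filter Topology ENNReal

variable {α : Type*} [MeasurableSpace α]

lemma meas_ofReal_lt' (c : ℝ≥0∞) :
    volume.restrict (Ioi (0:ℝ)) {s : ℝ | ENNReal.ofReal s < c} = c := by
  rw [Measure.restrict_apply' measurableSet_Ioi]
  rcases eq_or_ne c ∞ with hc | hc
  · have h : {s : ℝ | ENNReal.ofReal s < c} ∩ Ioi 0 = Ioi 0 := by
      rw [hc]; ext t; simp [ENNReal.ofReal_lt_top]
    rw [h, Real.volume_Ioi, hc]
  · have h : {s : ℝ | ENNReal.ofReal s < c} ∩ Ioi 0 = Ioo 0 c.toReal := by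
      ext t
      simp only [mem_inter_iff, mem_setOf_eq, mem_Ioi, mem_Ioo]
      constructor
      · rintro ⟨h1, h2⟩; exact ⟨h2, (ENNReal.ofReal_lt_iff_lt_toReal h2.le hc).mp h1⟩
      · rintro ⟨h1, h2⟩; exact ⟨(ENNReal.ofReal_lt_iff_lt_toReal h1.le hc).mpr h2, h1⟩
    rw [h, Real.volume_Ioo, sub_zero, ENNReal.ofReal_toReal hc]

lemma layercake_ennreal' {β : Type*} [MeasurableSpace β] (ν : Measure β) [SFinite ν]
    {H : β → ℝ≥0∞} (hH : Measurable H) :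
    ∫⁻ x, H x ∂ν = ∫⁻ s in Ioi (0:ℝ), ν {x | ENNReal.ofReal s < H x} := by
  have hrep : ∀ x, H x
      = ∫⁻ s in Ioi (0:ℝ), {s : ℝ | ENNReal.ofReal s < H x}.indicator (fun _ => 1) s := by
    intro x
    have hms : MeasurableSet {s : ℝ | ENNReal.ofReal s < H x} :=
      measurableSet_lt ENNReal.measurable_ofReal measurable_const
    rw [lintegral_indicator hms, setLIntegral_one, meas_ofReal_lt']
  calc ∫⁻ x, H x ∂ν
      = ∫⁻ x, (∫⁻ s in Ioi (0:ℝ),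
          {s : ℝ | ENNReal.ofReal s < H x}.indicator (fun _ => 1) s) ∂ν :=
        lintegral_congr hrep
    _ = ∫⁻ s in Ioi (0:ℝ), (∫⁻ x,
          {s' : ℝ | ENNReal.ofReal s' < H x}.indicator (fun _ => 1) s ∂ν) := by
        apply lintegral_lintegral_swap
        have hset : MeasurableSet {q : β × ℝ | ENNReal.ofReal q.2 < H q.1} :=
          measurableSet_lt (ENNReal.measurable_ofReal.comp measurable_snd)
            (hH.comp measurable_fst)
        have : Function.uncurry
            (fun x s => ({s' : ℝ | ENNReal.ofReal s' < H x}.indicator (fun _ => 1) s : ℝ≥0∞))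
            = {q : β × ℝ | ENNReal.ofReal q.2 < H q.1}.indicator (fun _ => 1) := by
          funext q
          by_cases h : ENNReal.ofReal q.2 < H q.1 <;>
            simp [Function.uncurry, indicator_apply, h]
        rw [this]
        exact ((measurable_const.indicator hset)).aemeasurable
    _ = ∫⁻ s in Ioi (0:ℝ), ν {x | ENNReal.ofReal s < H x} := by
        refine lintegral_congr fun s => ?_
        have h : (fun x => ({s' : ℝ | ENNReal.ofReal s' < H x}.indicator (fun _ => 1) s : ℝ≥0∞))
            = {x | ENNReal.ofReal s < H x}.indicator (fun _ => 1) := by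
          funext x
          by_cases h : ENNReal.ofReal s < H x <;> simp [indicator_apply, h]
        rw [h]
        exact lintegral_indicator_one (measurableSet_lt measurable_const hH)

lemma layercake2' {β : Type*} [MeasurableSpace β] (ν : Measure β) [SFinite ν]
    {H₁ H₂ : β → ℝ≥0∞} (h1 : Measurable H₁) (h2 : Measurable H₂) :
    ∫⁻ x, H₁ x * H₂ x ∂ν
      = ∫⁻ s in Ioi (0:ℝ), ∫⁻ r in Ioi (0:ℝ),
          ν ({x | ENNReal.ofReal s < H₁ x} ∩ {x | ENNReal.ofReal r < H₂ x}) := by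
  have e1 : ∫⁻ x, H₁ x * H₂ x ∂ν = ∫⁻ x, H₁ x ∂(ν.withDensity H₂) := by
    rw [lintegral_withDensity_eq_lintegral_mul ν h2 h1]
    simp_rw [Pi.mul_apply, mul_comm]
  rw [e1, layercake_ennreal' _ h1]
  refine lintegral_congr fun s => ?_
  rw [withDensity_apply _ (measurableSet_lt measurable_const h1), layercake_ennreal' _ h2]
  refine lintegral_congr fun r => ?_
  rw [Measure.restrict_apply (measurableSet_lt measurable_const h2), inter_comm]

/-- `‖f‖_{Λ^p(R, v_*)} ≤ ‖f‖_{L^p(R, v)}` for every μ-measurable `f`. -/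
theorem lorentz_norm_le_weighted_Lp_norm
    (μ : Measure α) [SigmaFinite μ] (hμ : Nonatomic μ)
    (p : ℝ) (hp : 0 < p) (v : α → ℝ) (hv : Measurable v) (hv0 : 0 ≤ v)
    (f : α → ℝ) (hf : Measurable f) :
    (∫⁻ t in Ioi (0 : ℝ), niRearr μ f t ^ p * ndRearr μ v t) ^ (1 / p) ≤
      (∫⁻ x, ENNReal.ofReal (|f x| ^ p * v x) ∂μ) ^ (1 / p) := by
  have hFanti : Antitone (niRearr μ f) := by
    intro t1 t2 h
    refine sInf_le_sInf ?_
    rintro y ⟨s, h1, h2, h3⟩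
    exact ⟨s, h1, h2.trans (ENNReal.ofReal_le_ofReal h), h3⟩
  have hGmono : Monotone (ndRearr μ v) := by
    intro t1 t2 h
    refine sSup_le_sSup ?_
    rintro y ⟨s, h1, h2, h3⟩
    exact ⟨s, h1, lt_of_lt_of_le h2 (ENNReal.ofReal_le_ofReal h), h3⟩
  have hFm : Measurable fun t => niRearr μ f t ^ p :=
    ENNReal.continuous_rpow_const.measurable.comp hFanti.measurable
  have hGm : Measurable (ndRearr μ v) := hGmono.measurable
  have hH1m : Measurable fun x => ENNReal.ofReal |f x| ^ p :=
    ENNReal.continuous_rpow_const.measurable.comp (ENNReal.measurable_ofReal.comp hf.abs)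
  have hH2m : Measurable fun x => ENNReal.ofReal (v x) := ENNReal.measurable_ofReal.comp hv
  -- rewrite the right-hand side
  have hRHS : ∫⁻ x, ENNReal.ofReal (|f x| ^ p * v x) ∂μ
      = ∫⁻ x, (ENNReal.ofReal |f x| ^ p) * ENNReal.ofReal (v x) ∂μ := by
    refine lintegral_congr fun x => ?_
    rw [ENNReal.ofReal_mul (Real.rpow_nonneg (abs_nonneg _) p),
      ENNReal.ofReal_rpow_of_nonneg (abs_nonneg _) hp.le]
  -- the key pointwise measure inequality
  have key : ∀ s : ℝ, 0 < s → ∀ r : ℝ, 0 < r →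
      (volume.restrict (Ioi (0:ℝ)))
          ({t : ℝ | ENNReal.ofReal s < niRearr μ f t ^ p}
            ∩ {t : ℝ | ENNReal.ofReal r < ndRearr μ v t})
        ≤ μ ({x | ENNReal.ofReal s < ENNReal.ofReal |f x| ^ p}
            ∩ {x | ENNReal.ofReal r < ENNReal.ofReal (v x)}) := by
    intro s hs r hr
    set s' := s ^ p⁻¹ with hs'def
    have hs' : 0 < s' := Real.rpow_pos_of_pos hs _
    have hsp : ENNReal.ofReal s' ^ p = ENNReal.ofReal s := by
      rw [ENNReal.ofReal_rpow_of_pos hs', hs'def, Real.rpow_inv_rpow hs.le hp.ne']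
    set D := μ {x | s' < |f x|} with hD
    set K := μ {x | ¬ r < v x} with hK
    have hsub : {t : ℝ | ENNReal.ofReal s < niRearr μ f t ^ p}
          ∩ {t : ℝ | ENNReal.ofReal r < ndRearr μ v t}
        ⊆ {t : ℝ | K < ENNReal.ofReal t ∧ ENNReal.ofReal t < D} := by
      rintro t ⟨h1, h2⟩
      simp only [mem_setOf_eq, ndRearr] at h2
      simp only [mem_setOf_eq] at h1
      constructor
      · obtain ⟨y, hy, hry⟩ := lt_sSup_iff.mp h2
        obtain ⟨s₀, hs₀, hκ, rfl⟩ := hy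
        have hrs₀ : r < s₀ := by
          by_contra hcon
          exact absurd hry (not_lt.mpr (ENNReal.ofReal_le_ofReal (not_lt.mp hcon)))
        calc K ≤ lowerDistrib μ v s₀ := by
              refine measure_mono fun x hx => ?_
              simp only [mem_setOf_eq, not_lt] at hx
              show |v x| < s₀
              rw [abs_of_nonneg (hv0 x)]
              exact lt_of_le_of_lt hx hrs₀
          _ < ENNReal.ofReal t := hκ
      · have h1' : ENNReal.ofReal s' < niRearr μ f t := by
          by_contra hcon
          push_neg at hcon
          have h := ENNReal.rpow_le_rpow hcon hp.le
          rw [hsp] at h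
          exact absurd h1 (not_lt.mpr h)
        by_contra hcon
        push_neg at hcon
        have hmem : ENNReal.ofReal s' ∈ {y : ℝ≥0∞ | ∃ s0 : ℝ, 0 < s0 ∧
            distrib μ f s0 ≤ ENNReal.ofReal t ∧ y = ENNReal.ofReal s0} :=
          ⟨s', hs', hcon, rfl⟩
        rw [niRearr] at h1'
        exact absurd h1' (not_lt.mpr (sInf_le hmem))
    have hmid : volume {t : ℝ | K < ENNReal.ofReal t ∧ ENNReal.ofReal t < D} ≤ D - K := by
      rcases eq_or_ne K ∞ with hKtop | hKtop
      · have he : {t : ℝ | K < ENNReal.ofReal t ∧ ENNReal.ofReal t < D} = ∅ := by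
          ext t
          simp only [mem_setOf_eq, mem_empty_iff_false, iff_false, not_and]
          intro h
          exact absurd h (by simp [hKtop])
        simp [he]
      rcases eq_or_ne D ∞ with hDtop | hDtop
      · rw [hDtop, ENNReal.top_sub hKtop]; exact le_top
      · have hss : {t : ℝ | K < ENNReal.ofReal t ∧ ENNReal.ofReal t < D}
            ⊆ Ioo K.toReal D.toReal := by
          rintro t ⟨h1, h2⟩
          have ht0 : 0 ≤ t := by
            by_contra h
            push_neg at h
            rw [ENNReal.ofReal_eq_zero.mpr h.le] at h1
            exact absurd h1 (not_lt.mpr (zero_le : 0 ≤ K))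
          exact ⟨(ENNReal.lt_ofReal_iff_toReal_lt hKtop).mp h1,
            (ENNReal.ofReal_lt_iff_lt_toReal ht0 hDtop).mp h2⟩
        calc volume {t : ℝ | K < ENNReal.ofReal t ∧ ENNReal.ofReal t < D}
            ≤ volume (Ioo K.toReal D.toReal) := measure_mono hss
          _ = ENNReal.ofReal (D.toReal - K.toReal) := Real.volume_Ioo
          _ = ENNReal.ofReal D.toReal - ENNReal.ofReal K.toReal :=
              ENNReal.ofReal_sub _ ENNReal.toReal_nonneg
          _ = D - K := by rw [ENNReal.ofReal_toReal hDtop, ENNReal.ofReal_toReal hKtop]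
    have hDK : D - K ≤ μ ({x | s' < |f x|} ∩ {x | r < v x}) := by
      rw [tsub_le_iff_right]
      calc D ≤ μ ({x | s' < |f x|} ∩ {x | r < v x})
            + μ ({x | s' < |f x|} \ {x | r < v x}) := measure_le_inter_add_diff μ _ _
        _ ≤ μ ({x | s' < |f x|} ∩ {x | r < v x}) + K :=
            add_le_add le_rfl (measure_mono fun x hx => hx.2)
    have hset : {x | ENNReal.ofReal s < ENNReal.ofReal |f x| ^ p}
          ∩ {x | ENNReal.ofReal r < ENNReal.ofReal (v x)}
        = {x | s' < |f x|} ∩ {x | r < v x} := by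
      ext x
      simp only [mem_inter_iff, mem_setOf_eq]
      rw [← hsp, ENNReal.rpow_lt_rpow_iff hp,
        ENNReal.ofReal_lt_ofReal_iff_of_nonneg hs'.le,
        ENNReal.ofReal_lt_ofReal_iff_of_nonneg hr.le]
    rw [hset]
    calc (volume.restrict (Ioi (0:ℝ)))
          ({t : ℝ | ENNReal.ofReal s < niRearr μ f t ^ p}
            ∩ {t : ℝ | ENNReal.ofReal r < ndRearr μ v t})
        ≤ (volume.restrict (Ioi (0:ℝ)))
            {t : ℝ | K < ENNReal.ofReal t ∧ ENNReal.ofReal t < D} := measure_mono hsub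
      _ ≤ volume {t : ℝ | K < ENNReal.ofReal t ∧ ENNReal.ofReal t < D} := by
          rw [Measure.restrict_apply' measurableSet_Ioi]
          exact measure_mono inter_subset_left
      _ ≤ D - K := hmid
      _ ≤ μ ({x | s' < |f x|} ∩ {x | r < v x}) := hDK
  -- put everything together
  have main : (∫⁻ t in Ioi (0 : ℝ), niRearr μ f t ^ p * ndRearr μ v t)
      ≤ ∫⁻ x, ENNReal.ofReal (|f x| ^ p * v x) ∂μ := by
    rw [hRHS, layercake2' μ hH1m hH2m, layercake2' (volume.restrict (Ioi (0:ℝ))) hFm hGm]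
    refine lintegral_mono_ae ?_
    rw [ae_restrict_iff' measurableSet_Ioi]
    refine ae_of_all _ fun s hs => ?_
    refine lintegral_mono_ae ?_
    rw [ae_restrict_iff' measurableSet_Ioi]
    exact ae_of_all _ fun r hr => key s hs r hr
  exact ENNReal.rpow_le_rpow main (by positivity)
end

section
/- Let (R, μ) be a σ-finite nonatomic measure space, p ∈ (0, ∞), and v : R → [0, ∞) a μ-measurable function whose nondecreasing rearrangement v_* (with respect to μ) is identically zero. Then for every μ-measurable g ≥ 0 with g^*(t) < ∞ for every t ∈ (0, ∞) and every ε > 0, there exists a μ-measurable function f with f^* = g^* and ( ∫_R |f|^p v dμ )^{1/p} ≤ ε. -/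
open MeasureTheory Set Filter Topology ENNReal

variable {α : Type*} [MeasurableSpace α]

namespace EQSN

variable {μ : Measure α}


variable {μ : Measure α}

lemma meas_diff_add {E F : Set α} (h : F ⊆ E) (hF : MeasurableSet F) :
    μ (E \ F) + μ F = μ E :=
  measure_diff_add_inter E hF ▸ by rw [inter_eq_self_of_subset_right h]

lemma exists_pos_finite (hμ : Nonatomic μ) {E : Set α} (hE : MeasurableSet E) (hpos : 0 < μ E) :
    ∃ F, F ⊆ E ∧ MeasurableSet F ∧ 0 < μ F ∧ μ F < ∞ := by
  rcases lt_or_ge (μ E) ∞ with h | h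
  · exact ⟨E, subset_rfl, hE, hpos, h⟩
  · obtain ⟨F, hFE, hFm, hF0, hFlt⟩ := hμ E hE hpos
    exact ⟨F, hFE, hFm, hF0, hFlt.trans_le le_top⟩

lemma exists_half (hμ : Nonatomic μ) {E : Set α} (hE : MeasurableSet E) (hpos : 0 < μ E)
    (hfin : μ E < ∞) : ∃ F, F ⊆ E ∧ MeasurableSet F ∧ 0 < μ F ∧ 2 * μ F ≤ μ E := by
  obtain ⟨F, hFE, hFm, hF0, hFlt⟩ := hμ E hE hpos
  have hsum : μ (E \ F) + μ F = μ E := meas_diff_add hFE hFm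
  rcases le_total (μ F) (μ (E \ F)) with h | h
  · refine ⟨F, hFE, hFm, hF0, ?_⟩
    calc 2 * μ F = μ F + μ F := two_mul _
    _ ≤ μ (E \ F) + μ F := by gcongr
    _ = μ E := hsum
  · refine ⟨E \ F, diff_subset, hE.diff hFm, ?_, ?_⟩
    · have : μ (E \ F) = μ E - μ F := measure_diff hFE hFm.nullMeasurableSet (hFlt.trans hfin).ne
      rw [this]
      exact tsub_pos_of_lt hFlt
    · calc 2 * μ (E \ F) = μ (E \ F) + μ (E \ F) := two_mul _
      _ ≤ μ (E \ F) + μ F := by gcongr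
      _ = μ E := hsum

lemma exists_small (hμ : Nonatomic μ) {E : Set α} (hE : MeasurableSet E) (hpos : 0 < μ E)
    {δ : ℝ≥0∞} (hδ : 0 < δ) : ∃ F, F ⊆ E ∧ MeasurableSet F ∧ 0 < μ F ∧ μ F ≤ δ := by
  obtain ⟨F0, hF0E, hF0m, hF00, hF0fin⟩ := exists_pos_finite hμ hE hpos
  have key : ∀ n : ℕ, ∃ F, F ⊆ F0 ∧ MeasurableSet F ∧ 0 < μ F ∧ μ F ≤ μ F0 * 2⁻¹ ^ n := by
    intro n
    induction n with
    | zero => exact ⟨F0, subset_rfl, hF0m, hF00, by simp⟩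
    | succ n ih =>
      obtain ⟨F, hFE, hFm, hF0, hFle⟩ := ih
      have hFfin : μ F < ∞ := hFle.trans_lt (by
        exact ENNReal.mul_lt_top hF0fin (by
          exact lt_of_le_of_lt (pow_le_one₀ (by simp) (by simp [ENNReal.inv_le_one])) one_lt_top))
      obtain ⟨G, hGF, hGm, hG0, hGle⟩ := exists_half hμ hFm hF0 hFfin
      refine ⟨G, hGF.trans hFE, hGm, hG0, ?_⟩
      have h2 : μ G ≤ μ F * 2⁻¹ := by
        calc μ G = 2⁻¹ * (2 * μ G) := by
              rw [← mul_assoc, ENNReal.inv_mul_cancel (by simp) (by simp), one_mul]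
        _ ≤ 2⁻¹ * μ F := by gcongr
        _ = μ F * 2⁻¹ := mul_comm _ _
      calc μ G ≤ μ F * 2⁻¹ := h2
      _ ≤ μ F0 * 2⁻¹ ^ n * 2⁻¹ := by gcongr
      _ = μ F0 * 2⁻¹ ^ (n + 1) := by rw [mul_assoc, ← pow_succ]
  obtain ⟨n, hn⟩ := ENNReal.exists_inv_two_pow_lt (ENNReal.div_pos hδ.ne' hF0fin.ne).ne'
  obtain ⟨F, hFE, hFm, hF0, hFle⟩ := key n
  refine ⟨F, hFE.trans hF0E, hFm, hF0, hFle.trans ?_⟩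
  calc μ F0 * 2⁻¹ ^ n ≤ μ F0 * (δ / μ F0) := mul_le_mul_right hn.le _
  _ ≤ δ := ENNReal.mul_div_le


variable {μ : Measure α}

lemma exists_subset_meas_eq (hμ : Nonatomic μ) {E : Set α} (hE : MeasurableSet E) {r : ℝ≥0∞}
    (hr : r ≤ μ E) (hrfin : r ≠ ∞) : ∃ F, F ⊆ E ∧ MeasurableSet F ∧ μ F = r := by
  classical
  set csup : Set α → ℝ≥0∞ := fun s =>
    ⨆ (F : Set α) (_ : MeasurableSet F ∧ F ⊆ E \ s ∧ μ F ≤ r - μ s), μ F with hcsup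
  have csup_le : ∀ s, csup s ≤ r - μ s := fun s =>
    iSup_le fun F => iSup_le fun hF => hF.2.2
  have step : ∀ s : Set α, ∃ F, MeasurableSet F ∧ F ⊆ E \ s ∧ μ F ≤ r - μ s ∧
      csup s ≤ 2 * μ F := by
    intro s
    by_cases h0 : csup s = 0
    · exact ⟨∅, MeasurableSet.empty, empty_subset _, by simp, by simp [h0]⟩
    · have hfin : csup s ≠ ∞ := fun h => hrfin (top_le_iff.mp ((h ▸ csup_le s).trans tsub_le_self))
      have hlt : csup s / 2 < csup s := ENNReal.half_lt_self h0 hfin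
      rw [hcsup] at hlt
      obtain ⟨F, hF⟩ := lt_iSup_iff.mp hlt
      obtain ⟨hFc, hFlt⟩ := lt_iSup_iff.mp hF
      refine ⟨F, hFc.1, hFc.2.1, hFc.2.2, ?_⟩
      calc csup s = 2 * (csup s / 2) := by
            rw [ENNReal.mul_div_cancel' (by simp) (by simp)]
      _ ≤ 2 * μ F := mul_le_mul_right hFlt.le 2
  let seq : ℕ → Set α := fun n => Nat.rec (∅ : Set α) (fun _ s => s ∪ (step s).choose) n
  have seq_succ : ∀ n, seq (n + 1) = seq n ∪ (step (seq n)).choose := fun n => rfl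
  have seq_add : ∀ n, μ (seq (n + 1)) = μ (seq n) + μ (step (seq n)).choose := by
    intro n
    rw [seq_succ n]
    exact measure_union (disjoint_of_subset_right (step (seq n)).choose_spec.2.1
      disjoint_sdiff_right) (step (seq n)).choose_spec.1
  have inv : ∀ n, MeasurableSet (seq n) ∧ seq n ⊆ E ∧ μ (seq n) ≤ r := by
    intro n
    induction n with
    | zero => exact ⟨MeasurableSet.empty, empty_subset _, by rw [show seq 0 = (∅ : Set α) from rfl, measure_empty]; exact zero_le⟩
    | succ n ih =>
      obtain ⟨hm, hsub, hle⟩ := ih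
      have h := (step (seq n)).choose_spec
      have hmeas : MeasurableSet (seq (n+1)) := by rw [seq_succ]; exact hm.union h.1
      have hsub' : seq (n+1) ⊆ E := by
        rw [seq_succ]
        exact union_subset hsub (h.2.1.trans diff_subset)
      have hle' : μ (seq (n+1)) ≤ r := by
        rw [seq_add n]
        calc μ (seq n) + μ (step (seq n)).choose ≤ μ (seq n) + (r - μ (seq n)) := by
              gcongr
              exact h.2.2.1
        _ = r := add_tsub_cancel_of_le hle
      exact ⟨hmeas, hsub', hle'⟩
  have seq_mono : Monotone seq := by
    apply monotone_nat_of_le_succ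
    intro n
    rw [seq_succ]
    exact subset_union_left
  set S := ⋃ n, seq n with hS
  have hSm : MeasurableSet S := MeasurableSet.iUnion fun n => (inv n).1
  have hSE : S ⊆ E := iUnion_subset fun n => (inv n).2.1
  have hSμ : μ S = ⨆ n, μ (seq n) := (seq_mono.directed_le).measure_iUnion
  have hSle : μ S ≤ r := by rw [hSμ]; exact iSup_le fun n => (inv n).2.2
  refine ⟨S, hSE, hSm, le_antisymm hSle ?_⟩
  by_contra hlt
  push_neg at hlt
  have hSfin : μ S ≠ ∞ := (hlt.trans_le (le_top.trans_eq rfl)).ne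
  have hd : 0 < r - μ S := tsub_pos_of_lt hlt
  have hES : 0 < μ (E \ S) := by
    rcases eq_or_ne (μ (E \ S)) 0 with h | h
    · exfalso
      have : μ E ≤ μ (E \ S) + μ S := by
        calc μ E = μ (E \ S) + μ (E ∩ S) := (measure_diff_add_inter E hSm).symm
        _ ≤ μ (E \ S) + μ S := add_le_add_right (measure_mono inter_subset_right) _
      rw [h, zero_add] at this
      exact absurd (hr.trans this) (not_le.mpr hlt)
    · exact pos_iff_ne_zero.mpr h
  obtain ⟨F, hFsub, hFm, hF0, hFd⟩ := exists_small hμ (hE.diff hSm) hES hd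
  set a := μ F / 2 with ha
  have ha0 : a ≠ 0 := by
    rw [ha]
    simp [ENNReal.div_eq_zero_iff, hF0.ne']
  have hafin : a ≠ ∞ := by
    rw [ha]
    exact (ENNReal.div_lt_top (by
      exact ((hFd.trans tsub_le_self).trans_lt (hrfin.lt_top)).ne) (by simp)).ne
  -- each step gains at least a
  have gain : ∀ n, μ (seq n) + a ≤ μ (seq (n + 1)) := by
    intro n
    have hcand : μ F ≤ csup (seq n) := by
      have hsub2 : F ⊆ E \ seq n := hFsub.trans (diff_subset_diff_right (subset_iUnion seq n))
      have hle2 : μ F ≤ r - μ (seq n) :=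
        hFd.trans (tsub_le_tsub_left (measure_mono (subset_iUnion seq n)) r)
      rw [hcsup]
      exact le_iSup_of_le F (le_iSup_of_le ⟨hFm, hsub2, hle2⟩ le_rfl)
    have h := (step (seq n)).choose_spec
    have : a ≤ μ (step (seq n)).choose := by
      rw [ha, ENNReal.div_le_iff_le_mul (Or.inl (by simp)) (Or.inl (by simp))]
      calc μ F ≤ 2 * μ (step (seq n)).choose := hcand.trans h.2.2.2
      _ = μ (step (seq n)).choose * 2 := mul_comm _ _
    rw [seq_add n]
    gcongr
  have lin : ∀ n : ℕ, (n : ℝ≥0∞) * a ≤ μ (seq n) := by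
    intro n
    induction n with
    | zero => simp
    | succ n ih =>
      calc ((n + 1 : ℕ) : ℝ≥0∞) * a = n * a + a := by push_cast; ring
      _ ≤ μ (seq n) + a := by gcongr
      _ ≤ μ (seq (n + 1)) := gain n
  have hbdd : ∀ n : ℕ, (n : ℝ≥0∞) ≤ r / a := by
    intro n
    rw [ENNReal.le_div_iff_mul_le (Or.inl ha0) (Or.inr hrfin)]
    exact (lin n).trans ((inv n).2.2)
  obtain ⟨n, hn⟩ := ENNReal.exists_nat_gt (ENNReal.div_lt_top hrfin ha0).ne
  exact absurd (hbdd n) (not_le.mpr hn)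


variable {μ : Measure α}

def RowP (μ : Measure α) (D : Set α) (m : ℝ) (k : ℕ) (E : ℕ → Set α) : Prop :=
  (∀ i, MeasurableSet (E i)) ∧ (Monotone E) ∧ (∀ i, E i ⊆ D) ∧
  (∀ i, μ (E i) = ENNReal.ofReal (min ((i : ℝ) * m / 2 ^ k) m)) ∧
  (∀ i, 2 ^ k ≤ i → E i = D)

lemma exists_between (hμ : Nonatomic μ) {A B : Set α} (hA : MeasurableSet A)
    (hB : MeasurableSet B) (hAB : A ⊆ B) {r : ℝ≥0∞} (h1 : μ A ≤ r) (h2 : r ≤ μ B)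
    (hrfin : r ≠ ∞) : ∃ C, A ⊆ C ∧ C ⊆ B ∧ MeasurableSet C ∧ μ C = r := by
  have hAfin : μ A ≠ ∞ := (h1.trans_lt hrfin.lt_top).ne
  have hdiff : r - μ A ≤ μ (B \ A) := by
    rw [measure_diff hAB hA.nullMeasurableSet hAfin]
    exact tsub_le_tsub_right h2 _
  obtain ⟨C', hC'sub, hC'm, hC'μ⟩ := exists_subset_meas_eq hμ (hB.diff hA) hdiff
    (tsub_le_self.trans_lt hrfin.lt_top).ne
  refine ⟨A ∪ C', subset_union_left, union_subset hAB (hC'sub.trans diff_subset),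
    hA.union hC'm, ?_⟩
  rw [measure_union (disjoint_of_subset_right hC'sub disjoint_sdiff_right) hC'm, hC'μ,
    add_tsub_cancel_of_le h1]

/-- dyadic approximation from below -/
lemma dyadic_approx {m t ε : ℝ} (hm : 0 < m) (ht : 0 < t) (hε : 0 < ε) (htm : t ≤ m) :
    ∃ k i : ℕ, (i : ℝ) * m / 2 ^ k < t ∧ t - ε ≤ (i : ℝ) * m / 2 ^ k := by
  have hc : 0 < min ε t := lt_min hε ht
  obtain ⟨k, hk⟩ := pow_unbounded_of_one_lt (m / min ε t) (one_lt_two (α := ℝ))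
  have h2k : (0 : ℝ) < 2 ^ k := by positivity
  set u := m / 2 ^ k with hu
  have hu0 : 0 < u := by positivity
  have hult : u < min ε t := by
    rw [hu, div_lt_iff₀ h2k]
    calc m = m / min ε t * min ε t := by field_simp
    _ < 2 ^ k * min ε t := by gcongr
    _ = min ε t * 2 ^ k := mul_comm _ _
  have htu : 0 < t / u := by positivity
  set i := ⌈t / u⌉₊ - 1 with hi
  have hceil : 1 ≤ ⌈t / u⌉₊ := Nat.one_le_iff_ne_zero.mpr (Nat.ceil_pos.mpr htu).ne'
  have hisucc : i + 1 = ⌈t / u⌉₊ := by omega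
  have hlt : (i : ℝ) * u < t := by
    have : (i : ℝ) < t / u := Nat.lt_ceil.mp (by omega)
    rwa [lt_div_iff₀ hu0] at this
  have hge : t - ε ≤ (i : ℝ) * u := by
    have h1 : t / u ≤ (i : ℝ) + 1 := by
      have := Nat.le_ceil (t / u)
      rw [← hisucc] at this
      exact_mod_cast this
    have h2 : t ≤ ((i : ℝ) + 1) * u := by
      rwa [div_le_iff₀ hu0] at h1
    have : t - u ≤ (i : ℝ) * u := by nlinarith
    have hue : u ≤ ε := (hult.trans_le (min_le_left _ _)).le
    linarith
  exact ⟨k, i, by rwa [mul_div_assoc], by rwa [mul_div_assoc]⟩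

lemma exists_chain (hμ : Nonatomic μ) {A : Set α} (hA : MeasurableSet A) (hAtop : μ A = ∞)
    {m : ℝ} (hm : 0 ≤ m) :
    ∃ D T, D ⊆ A ∧ MeasurableSet D ∧ μ D = ENNReal.ofReal m ∧ Measurable T ∧
      (∀ x ∈ D, 0 ≤ T x ∧ T x ≤ m) ∧
      ∀ t : ℝ, μ (D ∩ {x | T x < t}) = ENNReal.ofReal (min t m) := by
  classical
  rcases eq_or_lt_of_le hm with hm0 | hm0
  · refine ⟨∅, fun _ => 1, empty_subset _, MeasurableSet.empty, by simp [← hm0],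
      measurable_const, fun x hx => absurd hx (notMem_empty x), fun t => ?_⟩
    rw [empty_inter, measure_empty, eq_comm, ENNReal.ofReal_eq_zero, ← hm0]
    exact min_le_right _ _
  obtain ⟨D, hDA, hDm, hDμ⟩ := exists_subset_meas_eq (r := ENNReal.ofReal m) hμ hA
    (le_of_le_of_eq le_top hAtop.symm) ENNReal.ofReal_ne_top
  -- the rows
  have row0 : RowP μ D m 0 (fun i => if i = 0 then ∅ else D) := by
    refine ⟨fun i => ?_, ?_, fun i => ?_, fun i => ?_, fun i hi => ?_⟩
    · by_cases h : i = 0 <;> simp [h, hDm]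
    · intro i j hij
      by_cases h : i = 0
      · simp [h]
      · have : j ≠ 0 := by omega
        simp [h, this]
    · by_cases h : i = 0 <;> simp [h]
    · by_cases h : i = 0
      · subst h
        show μ (if 0 = 0 then (∅ : Set α) else D) = _
        rw [if_pos rfl, measure_empty, eq_comm, ENNReal.ofReal_eq_zero]
        simp
      · have h1 : (1 : ℝ) ≤ (i : ℝ) := by exact_mod_cast Nat.one_le_iff_ne_zero.mpr h
        have hmin : min ((i : ℝ) * m / 2 ^ 0) m = m := by
          rw [min_eq_right]
          rw [pow_zero, div_one]
          nlinarith
        show μ (if i = 0 then (∅ : Set α) else D) = _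
        rw [if_neg h, hDμ, hmin]
    · have hne : i ≠ 0 := by omega
      show (if i = 0 then (∅ : Set α) else D) = D
      rw [if_neg hne]
  have hsucc : ∀ k (E : ℕ → Set α), RowP μ D m k E →
      ∃ E', RowP μ D m (k + 1) E' ∧ ∀ i, E' (2 * i) = E i := by
    intro k E hP
    obtain ⟨hmeas, hmono, hsub, hval, htop⟩ := hP
    have h2k : (0:ℝ) < 2 ^ k := by positivity
    have h2k1 : (0:ℝ) < 2 ^ (k+1) := by positivity
    have cast2 : ((2:ℝ)) ^ (k+1) = 2 ^ k * 2 := by rw [pow_succ]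
    have key : ∀ a : ℕ, ∃ C, E a ⊆ C ∧ C ⊆ E (a + 1) ∧ MeasurableSet C ∧
        μ C = ENNReal.ofReal (min (((2 * a + 1 : ℕ) : ℝ) * m / 2 ^ (k + 1)) m) := by
      intro a
      refine exists_between hμ (hmeas a) (hmeas (a+1)) (hmono (Nat.le_succ a)) ?_ ?_
        ENNReal.ofReal_ne_top
      · rw [hval a]
        apply ENNReal.ofReal_le_ofReal
        apply min_le_min_right
        push_cast
        rw [cast2, div_le_div_iff₀ h2k (by positivity : (0:ℝ) < 2 ^ k * 2)]
        nlinarith [mul_nonneg hm (le_of_lt h2k)]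
      · rw [hval (a+1)]
        apply ENNReal.ofReal_le_ofReal
        apply min_le_min_right
        push_cast
        rw [cast2, div_le_div_iff₀ (by positivity : (0:ℝ) < 2 ^ k * 2) h2k]
        nlinarith [mul_nonneg hm (le_of_lt h2k)]
    set E' : ℕ → Set α := fun j =>
      if j % 2 = 0 then E (j / 2) else (key (j / 2)).choose with hE'
    have hrel : ∀ i, E' (2 * i) = E i := by
      intro i
      have h1 : (2 * i) % 2 = 0 := Nat.mul_mod_right 2 i
      have h2 : (2 * i) / 2 = i := Nat.mul_div_cancel_left i (by norm_num)
      show (if (2 * i) % 2 = 0 then E ((2 * i) / 2) else (key ((2 * i) / 2)).choose) = E i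
      rw [if_pos h1, h2]
    have hstep : ∀ j, E' j ⊆ E' (j + 1) := by
      intro j
      rcases Nat.even_or_odd j with he | ho
      · have hj2 : j % 2 = 0 := Nat.even_iff.mp he
        have hj12 : ¬((j + 1) % 2 = 0) := by omega
        have hd : (j + 1) / 2 = j / 2 := by omega
        show (if j % 2 = 0 then E (j / 2) else (key (j / 2)).choose) ⊆
          (if (j + 1) % 2 = 0 then E ((j + 1) / 2) else (key ((j + 1) / 2)).choose)
        rw [if_pos hj2, if_neg hj12, hd]
        exact (key (j / 2)).choose_spec.1
      · have hj1 : j % 2 = 1 := Nat.odd_iff.mp ho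
        have hj2 : ¬(j % 2 = 0) := by omega
        have hj12 : (j + 1) % 2 = 0 := by omega
        have hd : (j + 1) / 2 = j / 2 + 1 := by omega
        show (if j % 2 = 0 then E (j / 2) else (key (j / 2)).choose) ⊆
          (if (j + 1) % 2 = 0 then E ((j + 1) / 2) else (key ((j + 1) / 2)).choose)
        rw [if_neg hj2, if_pos hj12, hd]
        exact (key (j / 2)).choose_spec.2.1
    have if_even : ∀ j, j % 2 = 0 → E' j = E (j / 2) := by
      intro j h
      show (if j % 2 = 0 then E (j / 2) else (key (j / 2)).choose) = _
      rw [if_pos h]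
    have if_odd : ∀ j, ¬(j % 2 = 0) → E' j = (key (j / 2)).choose := by
      intro j h
      show (if j % 2 = 0 then E (j / 2) else (key (j / 2)).choose) = _
      rw [if_neg h]
    refine ⟨E', ⟨fun j => ?_, monotone_nat_of_le_succ hstep, fun j => ?_, fun j => ?_,
      fun j hj => ?_⟩, hrel⟩
    · by_cases h : j % 2 = 0
      · rw [if_even j h]; exact hmeas _
      · rw [if_odd j h]; exact (key (j / 2)).choose_spec.2.2.1
    · by_cases h : j % 2 = 0
      · rw [if_even j h]; exact hsub _
      · rw [if_odd j h]; exact (key (j / 2)).choose_spec.2.1.trans (hsub _)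
    · by_cases h : j % 2 = 0
      · rw [if_even j h, hval]
        congr 1
        have hc : (j : ℝ) = 2 * ((j / 2 : ℕ) : ℝ) := by exact_mod_cast (by omega : j = 2 * (j / 2))
        congr 1
        rw [hc, cast2]
        field_simp
      · rw [if_odd j h, (key (j / 2)).choose_spec.2.2.2]
        congr 4
        exact_mod_cast congrArg (Nat.cast : ℕ → ℝ) (by omega : 2 * (j / 2) + 1 = j)
    · have hdiv : 2 ^ k ≤ j / 2 := by
        rw [Nat.le_div_iff_mul_le (by norm_num : 0 < 2)]
        calc 2 ^ k * 2 = 2 ^ (k + 1) := (pow_succ 2 k).symm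
        _ ≤ j := hj
      by_cases h : j % 2 = 0
      · rw [if_even j h]; exact htop _ hdiv
      · rw [if_odd j h]
        refine Subset.antisymm ((key (j / 2)).choose_spec.2.1.trans ?_)
          (((htop _ hdiv).symm ▸ (key (j / 2)).choose_spec.1 : D ⊆ _))
        rw [htop _ (hdiv.trans (Nat.le_succ _))]
  -- build the rows by recursion
  let rows : ∀ k : ℕ, {E : ℕ → Set α // RowP μ D m k E} := fun k =>
    Nat.rec ⟨_, row0⟩ (fun k prev =>
      ⟨(hsucc k prev.1 prev.2).choose, (hsucc k prev.1 prev.2).choose_spec.1⟩) k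
  set Efam : ℕ → ℕ → Set α := fun k i => (rows k).1 i with hEfam
  have rows_rel : ∀ k i, Efam (k + 1) (2 * i) = Efam k i := fun k i =>
    (hsucc k (rows k).1 (rows k).2).choose_spec.2 i
  have Emeas : ∀ k i, MeasurableSet (Efam k i) := fun k i => (rows k).2.1 i
  have Emono : ∀ k, Monotone (Efam k) := fun k => (rows k).2.2.1
  have Esub : ∀ k i, Efam k i ⊆ D := fun k i => (rows k).2.2.2.1 i
  have Eval : ∀ k i, μ (Efam k i) = ENNReal.ofReal (min ((i : ℝ) * m / 2 ^ k) m) :=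
    fun k i => (rows k).2.2.2.2.1 i
  have E01 : Efam 0 1 = D := by
    show (if (1 : ℕ) = 0 then (∅ : Set α) else D) = D
    rw [if_neg one_ne_zero]
  have lift : ∀ k n i, Efam k i = Efam (k + n) (2 ^ n * i) := by
    intro k n i
    induction n with
    | zero => simp
    | succ n ih =>
      rw [ih, ← rows_rel (k + n) (2 ^ n * i)]
      show Efam (k + n + 1) _ = Efam (k + (n + 1)) _
      congr 1
      ring
  have total : ∀ (k i l j : ℕ), Efam k i ⊆ Efam l j ∨ Efam l j ⊆ Efam k i := by
    have aux : ∀ (k l : ℕ), k ≤ l → ∀ i j, Efam k i ⊆ Efam l j ∨ Efam l j ⊆ Efam k i := by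
      intro k l hkl i j
      obtain ⟨n, rfl⟩ := Nat.exists_eq_add_of_le hkl
      rw [lift k n i]
      rcases le_total (2 ^ n * i) j with h | h
      · exact Or.inl (Emono _ h)
      · exact Or.inr (Emono _ h)
    intro k i l j
    rcases le_total k l with h | h
    · exact aux k l h i j
    · exact (aux l k h j i).symm
  -- the map T
  set Sset : α → Set ℝ := fun x => {d | ∃ k i : ℕ, x ∈ Efam k i ∧ d = (i : ℝ) * m / 2 ^ k}
    with hSset
  set T : α → ℝ := fun x => sInf (Sset x) with hT
  have Sbdd : ∀ x, BddBelow (Sset x) := by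
    intro x
    refine ⟨0, fun d hd => ?_⟩
    obtain ⟨k, i, _, rfl⟩ := hd
    positivity
  have SD : ∀ x ∈ D, (m : ℝ) ∈ Sset x := by
    intro x hx
    exact ⟨0, 1, E01.symm ▸ hx, by norm_num⟩
  have hTnonneg : ∀ x ∈ D, 0 ≤ T x := by
    intro x hx
    refine le_csInf ⟨m, SD x hx⟩ (fun d hd => ?_)
    obtain ⟨k, i, _, rfl⟩ := hd
    positivity
  have hTle : ∀ x ∈ D, T x ≤ m := fun x hx => csInf_le (Sbdd x) (SD x hx)
  have hSsub : ∀ x k i, x ∈ Efam k i → x ∈ D := fun x k i h => Esub k i h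
  have hTzero : ∀ x, x ∉ D → T x = 0 := by
    intro x hx
    have hemp : Sset x = ∅ := by
      rw [eq_empty_iff_forall_notMem]
      rintro d ⟨k, i, hE, _⟩
      exact hx (hSsub x k i hE)
    rw [hT]
    simp only [hemp, Real.sInf_empty]
  have hUnion : ∀ t : ℝ, D ∩ {x | T x < t} =
      ⋃ (p : ℕ × ℕ) (_ : ((p.2 : ℝ) * m / 2 ^ p.1 < t)), Efam p.1 p.2 := by
    intro t
    ext x
    constructor
    · rintro ⟨hxD, hxT⟩
      obtain ⟨d, hd, hdt⟩ := (csInf_lt_iff (Sbdd x) ⟨m, SD x hxD⟩).mp hxT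
      obtain ⟨k, i, hxE, rfl⟩ := hd
      exact mem_iUnion.mpr ⟨(k, i), mem_iUnion.mpr ⟨hdt, hxE⟩⟩
    · intro hx
      obtain ⟨p, hp⟩ := mem_iUnion.mp hx
      obtain ⟨hpt, hxE⟩ := mem_iUnion.mp hp
      refine ⟨hSsub x _ _ hxE, ?_⟩
      exact (csInf_le (Sbdd x) ⟨p.1, p.2, hxE, rfl⟩).trans_lt hpt
  have hUmeas : ∀ t : ℝ, MeasurableSet
      (⋃ (p : ℕ × ℕ) (_ : ((p.2 : ℝ) * m / 2 ^ p.1 < t)), Efam p.1 p.2) :=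
    fun t => MeasurableSet.iUnion fun p => MeasurableSet.iUnion fun _ => Emeas p.1 p.2
  have hTmeas : Measurable T := by
    apply measurable_of_Iio
    intro t
    have hpre : T ⁻¹' Iio t = (D ∩ {x | T x < t}) ∪ (Dᶜ ∩ {_x : α | (0 : ℝ) < t}) := by
      ext x
      simp only [mem_preimage, mem_Iio, mem_union, mem_inter_iff, mem_setOf_eq, mem_compl_iff]
      by_cases hxD : x ∈ D
      · constructor
        · intro h; exact Or.inl ⟨hxD, h⟩
        · rintro (⟨_, h⟩ | ⟨h, _⟩)
          · exact h
          · exact absurd hxD h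
      · rw [hTzero x hxD]
        constructor
        · intro h; exact Or.inr ⟨hxD, h⟩
        · rintro (⟨h, _⟩ | ⟨_, h⟩)
          · exact absurd h hxD
          · exact h
    rw [hpre, hUnion t]
    refine ((hUmeas t).union (hDm.compl.inter ?_))
    by_cases ht : (0 : ℝ) < t
    · simp only [ht, setOf_true]; exact MeasurableSet.univ
    · simp only [ht, setOf_false]; exact MeasurableSet.empty
  have hkey : ∀ t : ℝ, μ (D ∩ {x | T x < t}) = ENNReal.ofReal (min t m) := by
    intro t
    rcases le_or_gt t 0 with ht | ht
    · have hempty : D ∩ {x | T x < t} = ∅ := by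
        rw [eq_empty_iff_forall_notMem]
        rintro x ⟨hxD, hxT⟩
        exact absurd (lt_of_le_of_lt (hTnonneg x hxD) hxT) (not_lt.mpr ht)
      rw [hempty, measure_empty, eq_comm, ENNReal.ofReal_eq_zero]
      exact (min_le_left t m).trans ht
    · rw [hUnion t]
      rw [← iUnion_subtype (fun p : ℕ × ℕ => (p.2 : ℝ) * m / 2 ^ p.1 < t)
        (fun q => Efam q.1.1 q.1.2)]
      have hdir : Directed (· ⊆ ·) (fun q : {p : ℕ × ℕ // (p.2 : ℝ) * m / 2 ^ p.1 < t} =>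
          Efam q.1.1 q.1.2) := by
        intro q1 q2
        rcases total q1.1.1 q1.1.2 q2.1.1 q2.1.2 with h | h
        · exact ⟨q2, h, subset_rfl⟩
        · exact ⟨q1, subset_rfl, h⟩
      rw [hdir.measure_iUnion]
      have hsupval : (⨆ q : {p : ℕ × ℕ // (p.2 : ℝ) * m / 2 ^ p.1 < t}, μ (Efam q.1.1 q.1.2)) =
          ⨆ q : {p : ℕ × ℕ // (p.2 : ℝ) * m / 2 ^ p.1 < t},
            ENNReal.ofReal (min ((q.1.2 : ℝ) * m / 2 ^ q.1.1) m) :=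
        iSup_congr fun q => Eval q.1.1 q.1.2
      rw [hsupval]
      apply le_antisymm
      · refine iSup_le fun q => ENNReal.ofReal_le_ofReal ?_
        exact le_min ((min_le_left _ _).trans q.2.le) (min_le_right _ _)
      · apply ENNReal.le_of_forall_pos_le_add
        intro ε hε _
        have hε' : (0 : ℝ) < (ε : ℝ) := by exact_mod_cast hε
        have hτ : 0 < min t m := lt_min ht hm0
        obtain ⟨k, i, hlt, hge⟩ := dyadic_approx hm0 hτ hε' (min_le_right t m)
        have hcond : (i : ℝ) * m / 2 ^ k < t := hlt.trans_le (min_le_left _ _)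
        calc ENNReal.ofReal (min t m) = ENNReal.ofReal ((min t m - ε) + ε) := by
              congr 1
              ring
        _ ≤ ENNReal.ofReal (min t m - ε) + ENNReal.ofReal (ε : ℝ) := ENNReal.ofReal_add_le
        _ ≤ (⨆ q : {p : ℕ × ℕ // (p.2 : ℝ) * m / 2 ^ p.1 < t},
              ENNReal.ofReal (min ((q.1.2 : ℝ) * m / 2 ^ q.1.1) m)) + ε := by
            refine add_le_add ?_ (le_of_eq ENNReal.ofReal_coe_nnreal)
            refine le_iSup_of_le ⟨(k, i), hcond⟩ (ENNReal.ofReal_le_ofReal ?_)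
            exact le_min hge (by linarith [min_le_right t m])
  exact ⟨D, T, hDA, hDm, hDμ, hTmeas, fun x hx => ⟨hTnonneg x hx, hTle x hx⟩, hkey⟩


variable {μ : Measure α}

lemma exists_pieces (hμ : Nonatomic μ) (A : ℕ → Set α) (hA : ∀ n, MeasurableSet (A n))
    (hAtop : ∀ n, μ (A n) = ∞) (m : ℕ → ℝ) (hm : ∀ n, 0 ≤ m n) :
    ∃ (D : ℕ → Set α) (T : ℕ → α → ℝ),
      (∀ n, MeasurableSet (D n)) ∧ (∀ n, D n ⊆ A n) ∧
      (∀ n, μ (D n) = ENNReal.ofReal (m n)) ∧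
      (Pairwise (Function.onFun Disjoint D)) ∧ (∀ n, Measurable (T n)) ∧
      (∀ n x, x ∈ D n → 0 ≤ T n x ∧ T n x ≤ m n) ∧
      (∀ n t, μ (D n ∩ {x | T n x < t}) = ENNReal.ofReal (min t (m n))) := by
  classical
  have main : ∀ (n : ℕ) (U : Set α), MeasurableSet U → μ U ≠ ∞ →
      ∃ DT : Set α × (α → ℝ), DT.1 ⊆ A n \ U ∧ MeasurableSet DT.1 ∧
        μ DT.1 = ENNReal.ofReal (m n) ∧ Measurable DT.2 ∧
        (∀ x ∈ DT.1, 0 ≤ DT.2 x ∧ DT.2 x ≤ m n) ∧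
        ∀ t : ℝ, μ (DT.1 ∩ {x | DT.2 x < t}) = ENNReal.ofReal (min t (m n)) := by
    intro n U hUm hUfin
    have hdiff : μ (A n \ U) = ∞ := by
      by_contra hne
      have hle : μ (A n) ≤ μ (A n \ U) + μ U :=
        (measure_mono (subset_diff_union _ _)).trans (measure_union_le _ _)
      rw [hAtop n] at hle
      exact ENNReal.add_ne_top.mpr ⟨hne, hUfin⟩ (top_le_iff.mp hle)
    obtain ⟨D, T, h1, h2, h3, h4, h5, h6⟩ := exists_chain hμ ((hA n).diff hUm) hdiff (hm n)
    exact ⟨(D, T), h1, h2, h3, h4, h5, h6⟩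
  let Useq : ℕ → {U : Set α // MeasurableSet U ∧ μ U ≠ ∞} := fun n => Nat.rec
    ⟨∅, MeasurableSet.empty, by simp⟩
    (fun n' Up =>
      ⟨Up.1 ∪ (main n' Up.1 Up.2.1 Up.2.2).choose.1,
        Up.2.1.union (main n' Up.1 Up.2.1 Up.2.2).choose_spec.2.1,
        by
          refine ne_top_of_le_ne_top ?_ (measure_union_le _ _)
          refine ENNReal.add_ne_top.mpr ⟨Up.2.2, ?_⟩
          rw [(main n' Up.1 Up.2.1 Up.2.2).choose_spec.2.2.1]
          exact ENNReal.ofReal_ne_top⟩) n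
  set D : ℕ → Set α := fun n => (main n (Useq n).1 (Useq n).2.1 (Useq n).2.2).choose.1 with hD
  set T : ℕ → α → ℝ := fun n => (main n (Useq n).1 (Useq n).2.1 (Useq n).2.2).choose.2 with hT
  have hspec := fun n => (main n (Useq n).1 (Useq n).2.1 (Useq n).2.2).choose_spec
  have hUsucc : ∀ n, (Useq (n + 1)).1 = (Useq n).1 ∪ D n := fun n => rfl
  have hUmono : Monotone (fun n => (Useq n).1) := by
    apply monotone_nat_of_le_succ
    intro n
    rw [hUsucc n]
    exact subset_union_left
  have hDU : ∀ n, D n ⊆ (Useq (n + 1)).1 := fun n => (hUsucc n).symm ▸ subset_union_right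
  have hDdisjU : ∀ n, Disjoint (D n) (Useq n).1 := fun n =>
    disjoint_of_subset_left (hspec n).1 disjoint_sdiff_left
  refine ⟨D, T, fun n => (hspec n).2.1, fun n => (hspec n).1.trans diff_subset,
    fun n => (hspec n).2.2.1, ?_, fun n => (hspec n).2.2.2.1,
    fun n x hx => (hspec n).2.2.2.2.1 x hx, fun n t => (hspec n).2.2.2.2.2 t⟩
  intro i j hij
  rcases lt_or_gt_of_ne hij with h | h
  · exact ((hDdisjU j).mono_right ((hDU i).trans (hUmono (Nat.succ_le_of_lt h)))).symm
  · exact (hDdisjU i).mono_right ((hDU j).trans (hUmono (Nat.succ_le_of_lt h)))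

-- interval lemmas over ℤ
lemma Ico_union_int : (⋃ k : ℤ, Ico ((2:ℝ) ^ k) (2 ^ (k + 1))) = Ioi (0:ℝ) := by
  ext x
  simp only [mem_iUnion, mem_Ico, mem_Ioi]
  constructor
  · rintro ⟨k, h1, _⟩
    exact lt_of_lt_of_le (zpow_pos (by norm_num : (0:ℝ) < 2) k) h1
  · intro hx
    obtain ⟨k, hk⟩ := exists_mem_Ico_zpow hx (one_lt_two (α := ℝ))
    exact ⟨k, hk.1, hk.2⟩

lemma Ico_disj_int : Pairwise (Function.onFun Disjoint
    (fun k : ℤ => Ico ((2:ℝ) ^ k) (2 ^ (k + 1)))) := by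
  intro k l hkl
  have haux : ∀ k l : ℤ, k < l → Disjoint (Ico ((2:ℝ) ^ k) (2 ^ (k + 1)))
      (Ico ((2:ℝ) ^ l) (2 ^ (l + 1))) := by
    intro k l h
    rw [Set.Ico_disjoint_Ico]
    calc min ((2:ℝ) ^ (k + 1)) (2 ^ (l + 1)) ≤ (2:ℝ) ^ (k+1) := min_le_left _ _
    _ ≤ (2:ℝ) ^ l := zpow_le_zpow_right₀ one_le_two (by omega)
    _ ≤ max ((2:ℝ) ^ k) (2 ^ l) := le_max_right _ _
  rcases lt_or_gt_of_ne hkl with h | h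
  · exact haux k l h
  · exact (haux l k h).symm

lemma term_eq_vol (c : ℝ) (k : ℤ) : ENNReal.ofReal (min (c - 2 ^ k) (2 ^ k)) =
    volume (Ico ((2:ℝ) ^ k) (2 ^ (k + 1)) ∩ Iio c) := by
  rw [Ico_inter_Iio, Real.volume_Ico]
  congr 1
  have h2 : (2:ℝ) ^ (k + 1) = 2 ^ k * 2 := by
    rw [zpow_add_one₀ (by norm_num : (2:ℝ) ≠ 0)]
  rcases le_total c ((2:ℝ) ^ (k + 1)) with h | h
  · rw [min_eq_right h, min_eq_left (by rw [h2] at h; linarith)]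
  · rw [min_eq_left h, min_eq_right (by rw [h2] at h; linarith), h2]
    ring

lemma sum_pieces (c : ℝ) (hc : 0 ≤ c) :
    ∑' k : ℤ, ENNReal.ofReal (min (c - 2 ^ k) (2 ^ k)) = ENNReal.ofReal c := by
  have h1 : ∀ k : ℤ, ENNReal.ofReal (min (c - 2 ^ k) (2 ^ k)) =
      volume (Ico ((2:ℝ) ^ k) (2 ^ (k + 1)) ∩ Iio c) := fun k => term_eq_vol c k
  rw [tsum_congr h1]
  rw [← measure_iUnion (Ico_disj_int.mono (fun k l h => h.mono inter_subset_left
    inter_subset_left)) (fun k => measurableSet_Ico.inter measurableSet_Iio)]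
  rw [← iUnion_inter, Ico_union_int, Ioi_inter_Iio, Real.volume_Ioo, sub_zero]

lemma sum_pieces_top : ∑' k : ℤ, ENNReal.ofReal ((2:ℝ) ^ k) = ∞ := by
  rw [eq_top_iff]
  calc (⊤ : ℝ≥0∞) = ∑' _ : ℕ, (1 : ℝ≥0∞) := (ENNReal.tsum_const_eq_top_of_ne_zero one_ne_zero).symm
  _ ≤ ∑' k : ℤ, ENNReal.ofReal ((2:ℝ) ^ k) := by
      refine Summable.tsum_le_tsum_of_inj (fun n : ℕ => (n : ℤ))
        (fun a b h => by simpa using h)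
        (fun c _ => zero_le) (fun i => ?_) ENNReal.summable ENNReal.summable
      show (1 : ℝ≥0∞) ≤ ENNReal.ofReal ((2:ℝ) ^ ((i : ℕ) : ℤ))
      rw [zpow_natCast, show (1 : ℝ≥0∞) = ENNReal.ofReal 1 from ENNReal.ofReal_one.symm]
      exact ENNReal.ofReal_le_ofReal (one_le_pow₀ one_le_two)


end EQSN

open EQSN in
/-- If `v_* ≡ 0`, then for every `g ≥ 0` with `g^*(t) < ∞` for all `t > 0` and every `ε > 0`
there is `f` equimeasurable with `g` such that `‖f‖_{L^p(R, v)} ≤ ε`. -/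
theorem exists_equimeasurable_small_norm
    (μ : Measure α) [SigmaFinite μ] (hμ : Nonatomic μ)
    (p : ℝ) (hp : 0 < p) (v : α → ℝ) (hv : Measurable v) (hv0 : 0 ≤ v)
    (hvz : ∀ t ∈ Ioi (0 : ℝ), ndRearr μ v t = 0)
    (g : α → ℝ) (hg : Measurable g) (hg0 : 0 ≤ g)
    (hgfin : ∀ t ∈ Ioi (0 : ℝ), niRearr μ g t < ∞)
    (ε : ℝ) (hε : 0 < ε) :
    ∃ f : α → ℝ, Measurable f ∧
      (∀ t ∈ Ioi (0 : ℝ), niRearr μ f t = niRearr μ g t) ∧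
      (∫⁻ x, ENNReal.ofReal (|f x| ^ p * v x) ∂μ) ^ (1 / p) ≤ ENNReal.ofReal ε := by
  classical
  -- step 1: the sets {v < s} have infinite measure
  have hInf : ∀ s : ℝ, 0 < s → μ {x | v x < s} = ∞ := by
    intro s hs
    by_contra hne
    set t : ℝ := (μ {x | v x < s}).toReal + 1 with htdef
    have ht : 0 < t := by positivity
    have hvabs : {x | |v x| < s} = {x | v x < s} := by
      ext x; rw [mem_setOf_eq, mem_setOf_eq, abs_of_nonneg (hv0 x)]
    have hlt : lowerDistrib μ v s < ENNReal.ofReal t := by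
      rw [lowerDistrib, hvabs, htdef, ENNReal.ofReal_add ENNReal.toReal_nonneg zero_le_one,
        ENNReal.ofReal_toReal hne, ENNReal.ofReal_one]
      exact ENNReal.lt_add_right hne one_ne_zero
    have hmem : ENNReal.ofReal s ∈ {y : ℝ≥0∞ | ∃ s' : ℝ, 0 < s' ∧
        lowerDistrib μ v s' < ENNReal.ofReal t ∧ y = ENNReal.ofReal s'} := ⟨s, hs, hlt, rfl⟩
    have hle : ENNReal.ofReal s ≤ 0 := by
      have h0 := hvz t (mem_Ioi.mpr ht)
      rw [ndRearr] at h0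
      exact h0 ▸ le_sSup hmem
    exact absurd ((ENNReal.ofReal_pos.mpr hs).trans_le hle) (lt_irrefl 0)
  -- step 2: the distribution function of g and its right continuity
  have lam_anti : ∀ s1 s2 : ℝ, s1 ≤ s2 → distrib μ g s2 ≤ distrib μ g s1 := fun s1 s2 h =>
    measure_mono (fun x hx => lt_of_le_of_lt h hx)
  have lam_rc : ∀ (s : ℝ) (c : ℝ≥0∞), (∀ s' : ℝ, s < s' → distrib μ g s' ≤ c) →
      distrib μ g s ≤ c := by
    intro s c hc
    have hun : {x | s < |g x|} = ⋃ n : ℕ, {x | s + 1 / (n + 1) < |g x|} := by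
      ext x
      simp only [mem_setOf_eq, mem_iUnion]
      constructor
      · intro h
        obtain ⟨n, hn⟩ := exists_nat_one_div_lt (sub_pos.mpr h)
        exact ⟨n, by linarith⟩
      · rintro ⟨n, hn⟩
        have hpos : (0:ℝ) < 1 / ((n:ℝ) + 1) := by positivity
        linarith
    have hmono : Monotone (fun n : ℕ => {x | s + 1 / ((n:ℝ) + 1) < |g x|}) := by
      intro n1 n2 h x hx
      simp only [mem_setOf_eq] at hx ⊢
      have h1 : (1:ℝ) / ((n2:ℝ) + 1) ≤ 1 / ((n1:ℝ) + 1) := by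
        apply one_div_le_one_div_of_le (by positivity)
        have : (n1:ℝ) ≤ (n2:ℝ) := by exact_mod_cast h
        linarith
      linarith
    calc distrib μ g s = μ (⋃ n : ℕ, {x | s + 1 / ((n:ℝ) + 1) < |g x|}) := by
          rw [distrib, hun]
    _ = ⨆ n : ℕ, μ {x | s + 1 / ((n:ℝ) + 1) < |g x|} := (hmono.directed_le).measure_iUnion
    _ ≤ c := iSup_le fun n => hc _ (lt_add_of_pos_right s (by positivity))
  -- step 3: the inverse function hfun
  set S : ℝ → Set ℝ := fun t => {s | 0 < s ∧ distrib μ g s ≤ ENNReal.ofReal t} with hSdef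
  have Sne : ∀ t : ℝ, 0 < t → (S t).Nonempty := by
    intro t ht
    have hfin := hgfin t (mem_Ioi.mpr ht)
    rw [niRearr] at hfin
    by_contra hemp
    rw [not_nonempty_iff_eq_empty] at hemp
    have hem2 : {y : ℝ≥0∞ | ∃ s : ℝ, 0 < s ∧ distrib μ g s ≤ ENNReal.ofReal t ∧
        y = ENNReal.ofReal s} = ∅ := by
      rw [eq_empty_iff_forall_notMem]
      rintro y ⟨s, hs0, hsd, rfl⟩
      exact eq_empty_iff_forall_notMem.mp hemp s ⟨hs0, hsd⟩
    rw [hem2, sInf_empty] at hfin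
    exact absurd hfin (lt_irrefl ⊤)
  have Sbdd : ∀ t, BddBelow (S t) := fun t => ⟨0, fun s hs => hs.1.le⟩
  set hfun : ℝ → ℝ := fun t => sInf (S t) with hfundef
  have hfun_nonneg : ∀ t, 0 ≤ hfun t := fun t => Real.sInf_nonneg (fun x hx => hx.1.le)
  have hfun_le_iff : ∀ t s : ℝ, 0 < t → 0 < s →
      (hfun t ≤ s ↔ distrib μ g s ≤ ENNReal.ofReal t) := by
    intro t s ht hs
    constructor
    · intro hle
      apply lam_rc
      intro s' hs'
      obtain ⟨s'', hs''S, hs''lt⟩ := (csInf_lt_iff (Sbdd t) (Sne t ht)).mp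
        (lt_of_le_of_lt hle hs')
      exact le_trans (lam_anti _ _ hs''lt.le) hs''S.2
    · intro hl
      exact csInf_le (Sbdd t) ⟨hs, hl⟩
  have hfun_gt_iff : ∀ t s : ℝ, 0 < t → 0 < s →
      (s < hfun t ↔ ENNReal.ofReal t < distrib μ g s) := by
    intro t s ht hs
    rw [← not_le, ← not_le, hfun_le_iff t s ht hs]
  have hfun_anti : ∀ t1 t2 : ℝ, 0 < t1 → t1 ≤ t2 → hfun t2 ≤ hfun t1 := by
    intro t1 t2 h1 h12
    exact csInf_le_csInf (Sbdd t2) (Sne t1 h1)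
      (fun s hs => ⟨hs.1, hs.2.trans (ENNReal.ofReal_le_ofReal h12)⟩)
  -- step 4: enumeration, weights and pieces
  set e : ℕ ≃ ℤ := (Denumerable.eqv ℤ).symm with hedef
  set a : ℕ → ℝ := fun n => (2:ℝ) ^ (e n) with hadef
  have ha_pos : ∀ n, 0 < a n := fun n => zpow_pos (by norm_num : (0:ℝ) < 2) _
  set B : ℕ → ℝ := fun n => hfun (a n) ^ p with hBdef
  have hB_nonneg : ∀ n, 0 ≤ B n := fun n => Real.rpow_nonneg (hfun_nonneg _) p
  set δ : ℕ → ℝ := fun n => min 1 (ε ^ p / (2 ^ (n + 1) * (B n * a n + 1))) with hδdef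
  have hQ_nonneg : ∀ n, 0 ≤ B n * a n := fun n => mul_nonneg (hB_nonneg n) (ha_pos n).le
  have hδ_pos : ∀ n, 0 < δ n := by
    intro n
    apply lt_min one_pos
    apply div_pos (Real.rpow_pos_of_pos hε p)
    apply _root_.mul_pos (by positivity : (0:ℝ) < 2 ^ (n + 1))
    linarith [hQ_nonneg n]
  obtain ⟨D, T, hDmeas, hDsub, hDμ, hDdisj, hTmeas, hTrange, hTkey⟩ :=
    exists_pieces hμ (fun n => {x | v x < δ n})
      (fun n => measurableSet_lt hv measurable_const)
      (fun n => hInf (δ n) (hδ_pos n)) a (fun n => (ha_pos n).le)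
  -- step 5: the function f
  set F : α → ℝ≥0∞ := fun x => ∑' n,
    (D n).indicator (fun y => ENNReal.ofReal (hfun (max (a n + T n y) (a n)))) x with hFdef
  set f : α → ℝ := fun x => (F x).toReal with hfdef
  have hφanti : ∀ n, Antitone (fun t : ℝ => hfun (max t (a n))) := by
    intro n t1 t2 h12
    exact hfun_anti _ _ (lt_of_lt_of_le (ha_pos n) (le_max_right _ _))
      (max_le_max h12 le_rfl)
  have hFmeas : Measurable F := by
    apply Measurable.ennreal_tsum
    intro n
    apply Measurable.indicator _ (hDmeas n)
    apply Measurable.ennreal_ofReal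
    exact (hφanti n).measurable.comp (measurable_const.add (hTmeas n))
  have hfmeas : Measurable f := hFmeas.ennreal_toReal
  have hval : ∀ n x, x ∈ D n → f x = hfun (a n + T n x) := by
    intro n x hx
    have hone : ∀ b : ℕ, b ≠ n →
        (D b).indicator (fun y => ENNReal.ofReal (hfun (max (a b + T b y) (a b)))) x = 0 := by
      intro b hb
      apply indicator_of_notMem
      exact fun hxb => (Set.disjoint_left.mp (hDdisj hb)) hxb hx
    have hmax : max (a n + T n x) (a n) = a n + T n x :=
      max_eq_left (le_add_of_nonneg_right (hTrange n x hx).1)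
    rw [hfdef]
    show (F x).toReal = _
    rw [hFdef]
    show (∑' b, (D b).indicator
      (fun y => ENNReal.ofReal (hfun (max (a b + T b y) (a b)))) x).toReal = _
    rw [tsum_eq_single n hone, indicator_of_mem hx, hmax]
    exact ENNReal.toReal_ofReal (hfun_nonneg _)
  have hval0 : ∀ x, (∀ n, x ∉ D n) → f x = 0 := by
    intro x hx
    have hzero : ∀ b : ℕ,
        (D b).indicator (fun y => ENNReal.ofReal (hfun (max (a b + T b y) (a b)))) x = 0 :=
      fun b => indicator_of_notMem (hx b) _
    rw [hfdef]
    show (F x).toReal = 0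
    rw [hFdef]
    show (∑' b, (D b).indicator
      (fun y => ENNReal.ofReal (hfun (max (a b + T b y) (a b)))) x).toReal = 0
    rw [tsum_congr hzero, tsum_zero]
    simp
  have hf_nonneg : ∀ x, 0 ≤ f x := fun x => ENNReal.toReal_nonneg
  -- step 6: distribution identity
  have harg_pos : ∀ n x, x ∈ D n → 0 < a n + T n x := fun n x hx =>
    add_pos_of_pos_of_nonneg (ha_pos n) (hTrange n x hx).1
  have hdist : ∀ s : ℝ, 0 < s → distrib μ f s = distrib μ g s := by
    intro s hs
    have hsetf : {x | s < |f x|} =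
        ⋃ n, (D n ∩ {x | ENNReal.ofReal (a n + T n x) < distrib μ g s}) := by
      ext x
      simp only [mem_setOf_eq, mem_iUnion, mem_inter_iff]
      constructor
      · intro hx
        by_cases hxD : ∃ n, x ∈ D n
        · obtain ⟨n, hn⟩ := hxD
          refine ⟨n, hn, ?_⟩
          rw [abs_of_nonneg (hf_nonneg x), hval n x hn] at hx
          exact (hfun_gt_iff (a n + T n x) s (harg_pos n x hn) hs).mp hx
        · push_neg at hxD
          rw [abs_of_nonneg (hf_nonneg x), hval0 x hxD] at hx
          exact absurd hx (not_lt.mpr hs.le)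
      · rintro ⟨n, hn, hlt⟩
        rw [abs_of_nonneg (hf_nonneg x), hval n x hn]
        exact (hfun_gt_iff _ s (harg_pos n x hn) hs).mpr hlt
    have hmeasn : ∀ n, MeasurableSet
        (D n ∩ {x | ENNReal.ofReal (a n + T n x) < distrib μ g s}) := by
      intro n
      apply (hDmeas n).inter
      exact measurableSet_lt ((measurable_const.add (hTmeas n)).ennreal_ofReal)
        measurable_const
    have hdisj' : Pairwise (Function.onFun Disjoint
        (fun n => D n ∩ {x | ENNReal.ofReal (a n + T n x) < distrib μ g s})) :=
      hDdisj.mono (fun i j h => h.mono inter_subset_left inter_subset_left)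
    rw [distrib, hsetf, measure_iUnion hdisj' hmeasn]
    rcases eq_or_ne (distrib μ g s) ⊤ with htop | hne
    · have hall : ∀ n, D n ∩ {x | ENNReal.ofReal (a n + T n x) < distrib μ g s} = D n := by
        intro n
        rw [htop]
        ext x
        simp [ENNReal.ofReal_lt_top]
      calc ∑' n, μ (D n ∩ {x | ENNReal.ofReal (a n + T n x) < distrib μ g s})
          = ∑' n, ENNReal.ofReal (a n) := by
            apply tsum_congr
            intro n
            rw [hall n, hDμ n]
      _ = ∑' k : ℤ, ENNReal.ofReal ((2:ℝ) ^ k) := e.tsum_eq (fun k => ENNReal.ofReal ((2:ℝ) ^ k))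
      _ = ⊤ := sum_pieces_top
      _ = distrib μ g s := htop.symm
    · set c : ℝ := (distrib μ g s).toReal with hcdef
      have hc0 : 0 ≤ c := ENNReal.toReal_nonneg
      have hofc : ENNReal.ofReal c = distrib μ g s := ENNReal.ofReal_toReal hne
      have hinter : ∀ n, D n ∩ {x | ENNReal.ofReal (a n + T n x) < distrib μ g s} =
          D n ∩ {x | T n x < c - a n} := by
        intro n
        ext x
        simp only [mem_inter_iff, mem_setOf_eq]
        constructor
        · rintro ⟨hxD, hxc⟩
          rw [← hofc] at hxc
          have := (ENNReal.ofReal_lt_ofReal_iff_of_nonneg (harg_pos n x hxD).le).mp hxc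
          exact ⟨hxD, by linarith⟩
        · rintro ⟨hxD, hxc⟩
          refine ⟨hxD, ?_⟩
          rw [← hofc]
          exact (ENNReal.ofReal_lt_ofReal_iff_of_nonneg (harg_pos n x hxD).le).mpr
            (by linarith)
      calc ∑' n, μ (D n ∩ {x | ENNReal.ofReal (a n + T n x) < distrib μ g s})
          = ∑' n, ENNReal.ofReal (min (c - a n) (a n)) := by
            apply tsum_congr
            intro n
            rw [hinter n, hTkey n (c - a n)]
      _ = ∑' k : ℤ, ENNReal.ofReal (min (c - 2 ^ k) (2 ^ k)) :=
          e.tsum_eq (fun k => ENNReal.ofReal (min (c - 2 ^ k) (2 ^ k)))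
      _ = ENNReal.ofReal c := sum_pieces c hc0
      _ = distrib μ g s := hofc
  -- step 7: equality of rearrangements
  have hrearr : ∀ t ∈ Ioi (0:ℝ), niRearr μ f t = niRearr μ g t := by
    intro t _
    rw [niRearr, niRearr]
    congr 1
    ext y
    constructor
    · rintro ⟨s, hs0, hsd, rfl⟩
      exact ⟨s, hs0, (hdist s hs0) ▸ hsd, rfl⟩
    · rintro ⟨s, hs0, hsd, rfl⟩
      exact ⟨s, hs0, (hdist s hs0).symm ▸ hsd, rfl⟩
  refine ⟨f, hfmeas, hrearr, ?_⟩
  -- step 8: the integral bound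
  set G : α → ℝ≥0∞ := fun x => ENNReal.ofReal (|f x| ^ p * v x) with hGdef
  set U : Set α := ⋃ n, D n with hUdef
  have hUmeas : MeasurableSet U := MeasurableSet.iUnion hDmeas
  have hcompl : ∫⁻ x in Uᶜ, G x ∂μ = 0 := by
    have hGz : ∀ x ∈ Uᶜ, G x = 0 := by
      intro x hx
      have hxn : ∀ n, x ∉ D n := by
        intro n hn
        exact hx (mem_iUnion.mpr ⟨n, hn⟩)
      rw [hGdef]
      show ENNReal.ofReal (|f x| ^ p * v x) = 0
      rw [hval0 x hxn, abs_zero, Real.zero_rpow hp.ne', zero_mul, ENNReal.ofReal_zero]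
    calc ∫⁻ x in Uᶜ, G x ∂μ = ∫⁻ _ in Uᶜ, 0 ∂μ :=
          setLIntegral_congr_fun hUmeas.compl hGz
    _ = 0 := lintegral_zero
  have hsplit : ∫⁻ x, G x ∂μ = ∫⁻ x in U, G x ∂μ := by
    rw [← lintegral_add_compl G hUmeas, hcompl, add_zero]
  have hper : ∀ n, ∫⁻ x in D n, G x ∂μ ≤ ENNReal.ofReal (ε ^ p * (1/2) ^ (n+1)) := by
    intro n
    have hbound : ∀ x ∈ D n, G x ≤ ENNReal.ofReal (B n * δ n) := by
      intro x hx
      apply ENNReal.ofReal_le_ofReal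
      have h1 : |f x| ≤ hfun (a n) := by
        rw [abs_of_nonneg (hf_nonneg x), hval n x hx]
        exact hfun_anti (a n) (a n + T n x) (ha_pos n)
          (le_add_of_nonneg_right (hTrange n x hx).1)
      have h2 : |f x| ^ p ≤ B n := by
        rw [hBdef]
        exact Real.rpow_le_rpow (abs_nonneg _) h1 hp.le
      have h3 : v x ≤ δ n := (hDsub n hx).le
      exact mul_le_mul h2 h3 (hv0 x) (hB_nonneg n)
    have hreal : B n * δ n * a n ≤ ε ^ p * (1/2) ^ (n+1) := by
      have hδle : δ n ≤ ε ^ p / (2 ^ (n + 1) * (B n * a n + 1)) := min_le_right _ _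
      have hQ := hQ_nonneg n
      have h2n : (0:ℝ) < 2 ^ (n+1) := by positivity
      have hεp : (0:ℝ) ≤ ε ^ p := (Real.rpow_pos_of_pos hε p).le
      have hkey : B n * a n * (ε ^ p / (2 ^ (n + 1) * (B n * a n + 1))) ≤
          ε ^ p / 2 ^ (n+1) := by
        rw [mul_div_assoc', div_le_div_iff₀ (by positivity) h2n]
        nlinarith [mul_nonneg hεp h2n.le, mul_nonneg (mul_nonneg hQ hεp) h2n.le]
      have hhalf : (1/2 : ℝ) ^ (n+1) = (2 ^ (n+1))⁻¹ := by
        rw [one_div, inv_pow]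
      calc B n * δ n * a n = B n * a n * δ n := by ring
      _ ≤ B n * a n * (ε ^ p / (2 ^ (n + 1) * (B n * a n + 1))) := by
          apply mul_le_mul_of_nonneg_left hδle hQ
      _ ≤ ε ^ p / 2 ^ (n+1) := hkey
      _ = ε ^ p * (1/2) ^ (n+1) := by rw [hhalf, div_eq_mul_inv]
    calc ∫⁻ x in D n, G x ∂μ ≤ ∫⁻ _ in D n, ENNReal.ofReal (B n * δ n) ∂μ :=
          setLIntegral_mono' (hDmeas n) hbound
    _ = ENNReal.ofReal (B n * δ n) * μ (D n) := setLIntegral_const _ _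
    _ = ENNReal.ofReal (B n * δ n) * ENNReal.ofReal (a n) := by rw [hDμ n]
    _ = ENNReal.ofReal (B n * δ n * a n) :=
          (ENNReal.ofReal_mul (mul_nonneg (hB_nonneg n) (hδ_pos n).le)).symm
    _ ≤ ENNReal.ofReal (ε ^ p * (1/2) ^ (n+1)) := ENNReal.ofReal_le_ofReal hreal
  have hgeo : ∑' n : ℕ, ENNReal.ofReal ((1/2 : ℝ) ^ (n+1)) = 1 := by
    have h12 : ENNReal.ofReal ((1/2 : ℝ)) = 2⁻¹ := by
      rw [one_div, ENNReal.ofReal_inv_of_pos (by norm_num : (0:ℝ) < 2)]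
      norm_num
    have hterm : ∀ n : ℕ, ENNReal.ofReal ((1/2 : ℝ) ^ (n+1)) = 2⁻¹ * 2⁻¹ ^ n := by
      intro n
      rw [ENNReal.ofReal_pow (by norm_num : (0:ℝ) ≤ 1/2), h12, pow_succ]
      ring
    rw [tsum_congr hterm, ENNReal.tsum_mul_left, ENNReal.tsum_geometric,
      ENNReal.one_sub_inv_two]
    exact ENNReal.mul_inv_cancel (by simp) (by simp)
  have htot : ∫⁻ x, G x ∂μ ≤ ENNReal.ofReal (ε ^ p) := by
    rw [hsplit, hUdef, lintegral_iUnion hDmeas hDdisj]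
    calc ∑' n, ∫⁻ x in D n, G x ∂μ ≤ ∑' n, ENNReal.ofReal (ε ^ p * (1/2) ^ (n+1)) :=
          ENNReal.tsum_le_tsum hper
    _ = ∑' n, ENNReal.ofReal (ε ^ p) * ENNReal.ofReal ((1/2) ^ (n+1)) := by
        apply tsum_congr
        intro n
        rw [← ENNReal.ofReal_mul (Real.rpow_pos_of_pos hε p).le]
    _ = ENNReal.ofReal (ε ^ p) * ∑' n, ENNReal.ofReal ((1/2 : ℝ) ^ (n+1)) :=
        ENNReal.tsum_mul_left
    _ = ENNReal.ofReal (ε ^ p) := by rw [hgeo, mul_one]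
  calc (∫⁻ x, G x ∂μ) ^ (1/p) ≤ (ENNReal.ofReal (ε ^ p)) ^ (1/p) :=
        ENNReal.rpow_le_rpow htot (by positivity)
  _ = ((ENNReal.ofReal ε) ^ p) ^ (1/p) := by rw [ENNReal.ofReal_rpow_of_pos hε]
  _ = ENNReal.ofReal ε := by
      rw [← ENNReal.rpow_mul, mul_one_div_cancel hp.ne', ENNReal.rpow_one]
end
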